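/- Let i ≤ j be positive integers and let Γ be a finite connected directed multigraph with a positive balanced weight containing distinct vertices a, b, c, d and two distinguished edges: an edge from c to b of weight i and an edge from d to a of weight j. Let Γ_1 be the graph obtained from Γ by deleting these two edges and adding two new vertices v_1, v_2 together with edges c→v_2 of weight i, v_2→a of weight j, d→v_1 of weight j, v_1→b of weight i, and v_1→v_2 of weight j−i (the last edge omitted if i = j). Let Γ_2 be the graph obtained from Γ by deleting the two distinguished edges and adding two new vertices v_1, v_2 together with edges c→v_1 of weight i, d→v_1 of weight j, v_1→v_2 of weight i+j, v_2→a of weight j, and v_2→b of weight i. Then for every root r chosen among the vertices of Γ: i·j·(i+j) · N(Γ, r) = −(i+j) · N(Γ_1, r) + j · N(Γ_2, r), i.e., N(Γ, r) = (−1/(i·j)) · N(Γ_1, r) + (1/(i·(i+j))) · N(Γ_2, r). -/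

import Mathlib

/-- A finite directed multigraph on vertex type `V` with edge type `E`. -/
structure Multidigraph (V E : Type) where
  src : E → V
  tgt : E → V

/-- `T` is an oriented spanning tree of `G` rooted at `r`: every vertex `v ≠ r`
has in-degree 1 in `T`, the root `r` has in-degree 0 in `T`, and `T` contains
no oriented cycle. -/
def IsOrientedSpanningTree {V E : Type} [Fintype E] [DecidableEq V]
    (G : Multidigraph V E) (r : V) (T : Finset E) : Prop :=
  (∀ v : V, v ≠ r → (T.filter (fun e => G.tgt e = v)).card = 1) ∧
  (T.filter (fun e => G.tgt e = r)).card = 0 ∧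
  ¬ ∃ l : List E, l ≠ [] ∧ (∀ e ∈ l, e ∈ T) ∧
      l.Chain' (fun e f => G.tgt e = G.src f) ∧
      ∀ e₁ ∈ l.head?, ∀ e₂ ∈ l.getLast?, G.tgt e₂ = G.src e₁

open Classical in
/-- The weighted number `N(Γ, w, r)` of oriented spanning trees rooted at `r`. -/
noncomputable def treeCount {V E : Type} [Fintype E] [DecidableEq V]
    (G : Multidigraph V E) (w : E → ℤ) (r : V) : ℤ :=
  ∑ T : Finset E, if IsOrientedSpanningTree G r T then ∏ e ∈ T, w e else 0


/-- Undirected connectivity of the underlying undirected graph. -/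
def MConnected {V E : Type} (G : Multidigraph V E) : Prop :=
  ∀ u v : V, Relation.ReflTransGen
    (fun x y => ∃ e : E, (G.src e = x ∧ G.tgt e = y) ∨ (G.src e = y ∧ G.tgt e = x)) u v

/-- A weight is balanced if at each vertex the incoming and outgoing weights agree. -/
def IsBalanced {V E : Type} [Fintype E] [DecidableEq V]
    (G : Multidigraph V E) (w : E → ℤ) : Prop :=
  ∀ v : V, ∑ e ∈ Finset.univ.filter (fun e => G.tgt e = v), w e
         = ∑ e ∈ Finset.univ.filter (fun e => G.src e = v), w e

section Skein

variable {V E : Type} [DecidableEq E]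

/-- The graph `Γ₁` (for the case `i ≤ j`): delete the two distinguished edges
`e₁ : c → b` and `e₂ : d → a`, add two new vertices `v₁ = Sum.inr 0` and
`v₂ = Sum.inr 1`, and add edges `c → v₂`, `v₂ → a`, `d → v₁`, `v₁ → b`, together
with an edge `v₁ → v₂` which is present exactly when `i ≠ j`. -/
def Gamma1 (G : Multidigraph V E) (e₁ e₂ : E) (a b c d : V) (i j : ℤ) :
    Multidigraph (V ⊕ Fin 2) ({e : E // e ≠ e₁ ∧ e ≠ e₂} ⊕ (Fin 4 ⊕ {u : Unit // i ≠ j})) where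
  src := Sum.elim (fun e => Sum.inl (G.src e.1))
    (Sum.elim ![Sum.inl c, Sum.inr 1, Sum.inl d, Sum.inr 0] (fun _ => Sum.inr 0))
  tgt := Sum.elim (fun e => Sum.inl (G.tgt e.1))
    (Sum.elim ![Sum.inr 1, Sum.inl a, Sum.inr 0, Sum.inl b] (fun _ => Sum.inr 1))

/-- The weight on `Γ₁` for the case `i ≤ j`: old edges keep their weight, the new
edges `c → v₂`, `v₂ → a`, `d → v₁`, `v₁ → b` have weights `i, j, j, i`, and the
optional edge `v₁ → v₂` has weight `j - i`. -/
def weight1 (w : E → ℤ) (e₁ e₂ : E) (i j : ℤ) :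
    ({e : E // e ≠ e₁ ∧ e ≠ e₂} ⊕ (Fin 4 ⊕ {u : Unit // i ≠ j})) → ℤ :=
  Sum.elim (fun e => w e.1) (Sum.elim ![i, j, j, i] (fun _ => j - i))

/-- The graph `Γ₂`: delete the two distinguished edges `e₁ : c → b` and
`e₂ : d → a`, add two new vertices `v₁ = Sum.inr 0` and `v₂ = Sum.inr 1`, and add
edges `c → v₁`, `d → v₁`, `v₁ → v₂`, `v₂ → a`, `v₂ → b`. -/
def Gamma2 (G : Multidigraph V E) (e₁ e₂ : E) (a b c d : V) :
    Multidigraph (V ⊕ Fin 2) ({e : E // e ≠ e₁ ∧ e ≠ e₂} ⊕ Fin 5) where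
  src := Sum.elim (fun e => Sum.inl (G.src e.1))
    ![Sum.inl c, Sum.inl d, Sum.inr 0, Sum.inr 1, Sum.inr 1]
  tgt := Sum.elim (fun e => Sum.inl (G.tgt e.1))
    ![Sum.inr 0, Sum.inr 0, Sum.inr 1, Sum.inl a, Sum.inl b]

/-- The weight on `Γ₂`: old edges keep their weight, and the new edges
`c → v₁`, `d → v₁`, `v₁ → v₂`, `v₂ → a`, `v₂ → b` have weights `i, j, i+j, j, i`. -/
def weight2 (w : E → ℤ) (e₁ e₂ : E) (i j : ℤ) :
    ({e : E // e ≠ e₁ ∧ e ≠ e₂} ⊕ Fin 5) → ℤ :=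
  Sum.elim (fun e => w e.1) ![i, j, i + j, j, i]

end Skein

open Classical Relation Finset Sum

/-- The child-to-parent step relation of an edge set. -/
def mstep {V E : Type} (G : Multidigraph V E) (T : Finset E) (v u : V) : Prop :=
  ∃ e ∈ T, G.tgt e = v ∧ G.src e = u

section LemmaA

variable {V E : Type} [Fintype V] [DecidableEq V] [Fintype E]

theorem ist_iff_reach (G : Multidigraph V E) (r : V) (T : Finset E) :
    IsOrientedSpanningTree G r T ↔
      ((∀ v : V, v ≠ r → (T.filter (fun e => G.tgt e = v)).card = 1) ∧
      (T.filter (fun e => G.tgt e = r)).card = 0 ∧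
      ∀ v, Relation.ReflTransGen (mstep G T) v r) := by
  have main : ∀ (h1 : ∀ v : V, v ≠ r → (T.filter (fun e => G.tgt e = v)).card = 1)
      (h0 : (T.filter (fun e => G.tgt e = r)).card = 0),
      ((¬ ∃ l : List E, l ≠ [] ∧ (∀ e ∈ l, e ∈ T) ∧
        l.Chain' (fun e f => G.tgt e = G.src f) ∧
        ∀ e₁ ∈ l.head?, ∀ e₂ ∈ l.getLast?, G.tgt e₂ = G.src e₁) ↔
      ∀ v, Relation.ReflTransGen (mstep G T) v r) := by
    intro h1 h0
    have hnotr : ∀ e ∈ T, G.tgt e ≠ r := by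
      intro e heT h
      have : e ∈ T.filter (fun e => G.tgt e = r) := Finset.mem_filter.2 ⟨heT, h⟩
      simp [Finset.card_eq_zero.1 h0] at this
    have hex : ∀ v : V, v ≠ r → ∃ e ∈ T, G.tgt e = v := by
      intro v hv
      have := h1 v hv
      obtain ⟨e, he⟩ := Finset.card_pos.1 (by omega : 0 < (T.filter (fun e => G.tgt e = v)).card)
      exact ⟨e, (Finset.mem_filter.1 he).1, (Finset.mem_filter.1 he).2⟩
    have huni : ∀ v : V, v ≠ r → ∀ e ∈ T, ∀ e' ∈ T, G.tgt e = v → G.tgt e' = v → e = e' := by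
      intro v hv e he e' he' h h'
      have hc := h1 v hv
      exact Finset.card_le_one.1 (le_of_eq hc) e (Finset.mem_filter.2 ⟨he, h⟩)
        e' (Finset.mem_filter.2 ⟨he', h'⟩)
    constructor
    · -- no cycle → all reach
      intro hnc v₀
      by_contra hv₀
      have hstep : ∀ v : V, ¬ Relation.ReflTransGen (mstep G T) v r →
          ∃ e, e ∈ T ∧ G.tgt e = v ∧ ¬ Relation.ReflTransGen (mstep G T) (G.src e) r := by
        intro v hv
        have hvr : v ≠ r := by rintro rfl; exact hv .refl
        obtain ⟨e, heT, he⟩ := hex v hvr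
        exact ⟨e, heT, he, fun h => hv (h.head ⟨e, heT, he, rfl⟩)⟩
      choose pe peT peTgt peSrc using hstep
      set Bad := {v : V // ¬ Relation.ReflTransGen (mstep G T) v r} with hBad
      let nxt : Bad → Bad := fun p => ⟨G.src (pe p.1 p.2), peSrc p.1 p.2⟩
      let u : ℕ → Bad := fun n => nxt^[n] ⟨v₀, hv₀⟩
      have hu : ∀ k, u (k + 1) = nxt (u k) := by
        intro k
        simp only [u, Function.iterate_succ_apply']
      let g : ℕ → E := fun k => pe (u k).1 (u k).2
      have hgT : ∀ k, g k ∈ T := fun k => peT _ _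
      have hgt : ∀ k, G.tgt (g k) = (u k).1 := fun k => peTgt _ _
      have hgs : ∀ k, G.src (g k) = (u (k + 1)).1 := by
        intro k; rw [hu k]
      obtain ⟨m, n, hmn, hueq⟩ := Finite.exists_ne_map_eq_of_infinite u
      wlog hlt : m < n generalizing m n
      · exact this n m hmn.symm hueq.symm (by omega)
      set l : List E := (List.range (n - m)).map (fun t => g (n - 1 - t)) with hl
      have hlen : l.length = n - m := by simp [hl]
      have hlne : l ≠ [] := by
        apply List.ne_nil_of_length_pos; omega
      have hget : ∀ (t : ℕ) (ht : t < l.length), l.get ⟨t, ht⟩ = g (n - 1 - t) := by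
        intro t ht
        simp [hl]
      refine hnc ⟨l, hlne, ?_, ?_, ?_⟩
      · intro e he
        obtain ⟨t, _, rfl⟩ := List.mem_map.1 he
        exact hgT _
      · rw [show List.Chain' = List.IsChain from rfl, List.isChain_iff_getElem]
        intro t ht
        rw [show l[t] = g (n - 1 - t) from hget t (by omega),
          show l[t + 1] = g (n - 1 - (t + 1)) from hget (t + 1) (by omega)]
        rw [hgt]
        have h2 : n - 1 - (t + 1) + 1 = n - 1 - t := by
          rw [hlen] at ht; omega
        rw [← h2, ← hgs]
      · intro e₁ h₁ e₂ h₂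
        rw [List.head?_eq_head hlne] at h₁
        rw [List.getLast?_eq_getLast hlne] at h₂
        have hh : l.head hlne = g (n - 1) := by
          rw [List.head_eq_getElem_zero hlne]; simp [hl]
        have hg' : l.getLast hlne = g m := by
          rw [List.getLast_eq_getElem]
          simp only [hl, List.getElem_map, List.getElem_range, List.length_map,
            List.length_range]
          congr 1
          omega
        simp only [Option.mem_def, Option.some_inj] at h₁ h₂
        subst h₁; subst h₂
        rw [hh, hg', hgt, hgs]
        have : n - 1 + 1 = n := by omega
        rw [this]
        rw [hueq]
    · -- all reach → no cycle
      rintro hr ⟨l, hne, hmem, hch, hcl⟩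
      obtain ⟨a, l', rfl⟩ := List.exists_cons_of_ne_nil hne
      set L := a :: l' with hL
      have hpred : ∀ e ∈ L, ∃ f ∈ L, G.tgt f = G.src e := by
        intro e he
        obtain ⟨⟨k, hk⟩, rfl⟩ := List.mem_iff_get.1 he
        match k, hk with
        | 0, hk =>
          refine ⟨L.getLast hne, List.getLast_mem hne, ?_⟩
          have := hcl (L.head hne) (by rw [List.head?_eq_head hne]; rfl)
            (L.getLast hne) (by rw [List.getLast?_eq_getLast hne]; rfl)
          convert this using 2
          rfl
        | (k+1), hk =>
          refine ⟨L.get ⟨k, by omega⟩, by rw [List.get_eq_getElem]; exact List.getElem_mem _, ?_⟩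
          exact List.isChain_iff_getElem.1 hch k (by omega)
      have key : ∀ v, Relation.ReflTransGen (mstep G T) v r → ∀ e ∈ L, G.tgt e ≠ v := by
        intro v hv
        induction hv using Relation.ReflTransGen.head_induction_on with
        | refl => intro e he h; exact hnotr e (hmem e he) h
        | head hst _ ih =>
          rename_i x c _
          intro e he h
          obtain ⟨e', he'T, h1', h2'⟩ := hst
          have hxr : x ≠ r := by rintro rfl; exact hnotr e' he'T h1'
          have hee : e' = e := huni x hxr e' he'T e (hmem e he) h1' (by rw [h])
          obtain ⟨f, hf, hft⟩ := hpred e he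
          exact ih f hf (by rw [hft, ← hee, h2'])
      exact key (G.tgt a) (hr _) a (by simp [hL]) rfl
  constructor
  · rintro ⟨h1, h0, hnc⟩
    exact ⟨h1, h0, (main h1 h0).1 hnc⟩
  · rintro ⟨h1, h0, hr⟩
    exact ⟨h1, h0, (main h1 h0).2 hr⟩

end LemmaA

section Transfer

open Classical Relation Finset Sum

variable {V E E' : Type} [Fintype E] [Fintype E'] [DecidableEq V]

theorem ist_map (G : Multidigraph V E) (G' : Multidigraph V E') (φ : E ≃ E')
    (hs : ∀ e, G'.src (φ e) = G.src e) (ht : ∀ e, G'.tgt (φ e) = G.tgt e)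
    (r : V) (T : Finset E) (h : IsOrientedSpanningTree G r T) :
    IsOrientedSpanningTree G' r (T.map φ.toEmbedding) := by
  obtain ⟨h1, h0, hnc⟩ := h
  have hfil : ∀ v : V, (T.map φ.toEmbedding).filter (fun e => G'.tgt e = v)
      = (T.filter (fun e => G.tgt e = v)).map φ.toEmbedding := by
    intro v
    ext e'
    simp only [Finset.mem_filter, Finset.mem_map, Equiv.coe_toEmbedding]
    constructor
    · rintro ⟨⟨e, he, rfl⟩, h2⟩
      exact ⟨e, ⟨he, by rw [← ht, h2]⟩, rfl⟩
    · rintro ⟨e, ⟨he, h2⟩, rfl⟩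
      exact ⟨⟨e, he, rfl⟩, by rw [ht, h2]⟩
  refine ⟨?_, ?_, ?_⟩
  · intro v hv; rw [hfil, Finset.card_map]; exact h1 v hv
  · rw [hfil, Finset.card_map]; exact h0
  · rintro ⟨l, hne, hmem, hch, hcl⟩
    refine hnc ⟨l.map φ.symm, by simpa using hne, ?_, ?_, ?_⟩
    · intro e he
      obtain ⟨e', he', rfl⟩ := List.mem_map.1 he
      have := hmem e' he'
      obtain ⟨e₀, he₀, rfl⟩ := Finset.mem_map.1 this
      simpa using he₀
    · rw [show List.Chain' = List.IsChain from rfl, List.isChain_map]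
      refine List.IsChain.imp ?_ hch
      intro x y hxy
      show G.tgt (φ.symm x) = G.src (φ.symm y)
      rw [← ht, ← hs, Equiv.apply_symm_apply, Equiv.apply_symm_apply]
      exact hxy
    · intro e₁ h₁ e₂ h₂
      rw [List.head?_map] at h₁
      rw [List.getLast?_map] at h₂
      obtain ⟨f₁, hf₁, rfl⟩ := Option.map_eq_some_iff.1 (Option.mem_def.1 h₁)
      obtain ⟨f₂, hf₂, rfl⟩ := Option.map_eq_some_iff.1 (Option.mem_def.1 h₂)
      have hcl' := hcl f₁ hf₁ f₂ hf₂
      have e2 := ht (φ.symm f₂)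
      have e1 := hs (φ.symm f₁)
      rw [Equiv.apply_symm_apply] at e2 e1
      rw [← e2, ← e1]
      exact hcl'

theorem treeCount_reindex (G : Multidigraph V E) (G' : Multidigraph V E')
    (w : E → ℤ) (w' : E' → ℤ) (φ : E ≃ E')
    (hs : ∀ e, G'.src (φ e) = G.src e) (ht : ∀ e, G'.tgt (φ e) = G.tgt e)
    (hw : ∀ e, w' (φ e) = w e) (r : V) :
    treeCount G w r = treeCount G' w' r := by
  have hs' : ∀ e', G.src (φ.symm e') = G'.src e' := by
    intro e'; rw [← hs, Equiv.apply_symm_apply]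
  have ht' : ∀ e', G.tgt (φ.symm e') = G'.tgt e' := by
    intro e'; rw [← ht, Equiv.apply_symm_apply]
  unfold treeCount
  refine Fintype.sum_equiv (Equiv.finsetCongr φ) _ _ ?_
  intro T
  have hiff : IsOrientedSpanningTree G r T ↔
      IsOrientedSpanningTree G' r (T.map φ.toEmbedding) := by
    constructor
    · exact ist_map G G' φ hs ht r T
    · intro h
      have := ist_map G' G φ.symm hs' ht' r _ h
      rwa [Finset.map_map, show (φ.toEmbedding.trans φ.symm.toEmbedding) =
        Function.Embedding.refl E by ext e; simp, Finset.map_refl] at this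
  rw [Equiv.finsetCongr_apply]
  by_cases h : IsOrientedSpanningTree G r T
  · rw [if_pos h, if_pos (hiff.1 h), Finset.prod_map]
    exact Finset.prod_congr rfl fun e _ => (hw e).symm
  · rw [if_neg h, if_neg (fun h' => h (hiff.2 h'))]

end Transfer

section DisjSumHelpers

open Classical Finset Sum

variable {α β : Type}

noncomputable def finsetSumEquiv : Finset α × Finset β ≃ Finset (α ⊕ β) where
  toFun p := p.1.disjSum p.2
  invFun u := (u.toLeft, u.toRight)
  left_inv p := by simp
  right_inv u := Finset.toLeft_disjSum_toRight

theorem sum_finset_disjSum [Fintype α] [Fintype β] {M : Type*} [AddCommMonoid M]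
    (f : Finset (α ⊕ β) → M) :
    ∑ T : Finset (α ⊕ β), f T = ∑ S : Finset α, ∑ U : Finset β, f (S.disjSum U) := by
  calc ∑ T : Finset (α ⊕ β), f T
      = ∑ p : Finset α × Finset β, f (p.1.disjSum p.2) :=
        (Fintype.sum_equiv finsetSumEquiv _ _ fun p => rfl).symm
    _ = ∑ S : Finset α, ∑ U : Finset β, f (S.disjSum U) := Fintype.sum_prod_type _

theorem filter_disjSum_card (S : Finset α) (U : Finset β) (p : α ⊕ β → Prop) [DecidablePred p] :
    ((S.disjSum U).filter p).card
      = (S.filter (fun x => p (Sum.inl x))).card + (U.filter (fun x => p (Sum.inr x))).card := by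
  rw [← Finset.card_disjSum]
  congr 1
  ext x
  cases x <;> simp

theorem mstep_disjSum {V : Type} (G : Multidigraph V (α ⊕ β)) (S : Finset α) (U : Finset β)
    (v u : V) :
    mstep G (S.disjSum U) v u ↔
      (∃ e ∈ S, G.tgt (Sum.inl e) = v ∧ G.src (Sum.inl e) = u) ∨
      (∃ f ∈ U, G.tgt (Sum.inr f) = v ∧ G.src (Sum.inr f) = u) := by
  constructor
  · rintro ⟨e, he, h1, h2⟩
    rcases e with e | f
    · exact Or.inl ⟨e, by simpa using he, h1, h2⟩
    · exact Or.inr ⟨f, by simpa using he, h1, h2⟩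
  · rintro (⟨e, he, h1, h2⟩ | ⟨f, hf, h1, h2⟩)
    · exact ⟨Sum.inl e, by simpa using he, h1, h2⟩
    · exact ⟨Sum.inr f, by simpa using hf, h1, h2⟩

end DisjSumHelpers

section Main
set_option linter.unusedSectionVars false

open Classical Relation Finset Sum

variable {V E : Type} [Fintype V] [Fintype E] [DecidableEq V] [DecidableEq E]

/-- In-degree of `v` in a set of old edges. -/
noncomputable def indeg (G : Multidigraph V E) (e₁ e₂ : E)
    (S : Finset {e : E // e ≠ e₁ ∧ e ≠ e₂}) (v : V) : ℕ :=
  (S.filter (fun e => G.tgt e.1 = v)).card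

/-- Weight of a set of old edges. -/
noncomputable def Wt (w : E → ℤ) (e₁ e₂ : E)
    (S : Finset {e : E // e ≠ e₁ ∧ e ≠ e₂}) : ℤ :=
  ∏ e ∈ S, w e.1

/-- Step relation of the old edges (child to parent). -/
def sstep (G : Multidigraph V E) (e₁ e₂ : E)
    (S : Finset {e : E // e ≠ e₁ ∧ e ≠ e₂}) (v u : V) : Prop :=
  ∃ e ∈ S, G.tgt e.1 = v ∧ G.src e.1 = u

/-- Whether the tree completion must give `a` a new in-edge. -/
def alA (G : Multidigraph V E) (e₁ e₂ : E) (r a : V)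
    (S : Finset {e : E // e ≠ e₁ ∧ e ≠ e₂}) : Prop :=
  indeg G e₁ e₂ S a = 0 ∧ a ≠ r

def alB (G : Multidigraph V E) (e₁ e₂ : E) (r b : V)
    (S : Finset {e : E // e ≠ e₁ ∧ e ≠ e₂}) : Prop :=
  indeg G e₁ e₂ S b = 0 ∧ b ≠ r

/-- The basic in-degree condition on old edges. -/
def Bs (G : Multidigraph V E) (e₁ e₂ : E) (r a b : V)
    (S : Finset {e : E // e ≠ e₁ ∧ e ≠ e₂}) : Prop :=
  (∀ v : V, v ≠ r → v ≠ a → v ≠ b → indeg G e₁ e₂ S v = 1) ∧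
  indeg G e₁ e₂ S r = 0 ∧ indeg G e₁ e₂ S a ≤ 1 ∧ indeg G e₁ e₂ S b ≤ 1

/-- Step relation of old edges together with the virtual arcs `b → x` and `a → y`. -/
def relxy (G : Multidigraph V E) (e₁ e₂ : E) (r a b : V)
    (S : Finset {e : E // e ≠ e₁ ∧ e ≠ e₂}) (x y : V) (v u : V) : Prop :=
  sstep G e₁ e₂ S v u ∨ (alB G e₁ e₂ r b S ∧ v = b ∧ u = x) ∨
    (alA G e₁ e₂ r a S ∧ v = a ∧ u = y)

def AR (G : Multidigraph V E) (e₁ e₂ : E) (r a b : V)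
    (S : Finset {e : E // e ≠ e₁ ∧ e ≠ e₂}) (x y : V) : Prop :=
  ∀ v : V, Relation.ReflTransGen (relxy G e₁ e₂ r a b S x y) v r

noncomputable def Phi (G : Multidigraph V E) (w : E → ℤ) (e₁ e₂ : E) (r a b : V) (i j : ℤ)
    (S : Finset {e : E // e ≠ e₁ ∧ e ≠ e₂}) (x y : V) : ℤ :=
  if Bs G e₁ e₂ r a b S ∧ AR G e₁ e₂ r a b S x y then
    Wt w e₁ e₂ S * (if alB G e₁ e₂ r b S then i else 1) * (if alA G e₁ e₂ r a S then j else 1)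
  else 0

variable (G : Multidigraph V E) (w : E → ℤ) (e₁ e₂ : E) (r a b : V) (i j : ℤ)

theorem Phi_pos {S} {x y : V} (h1 : Bs G e₁ e₂ r a b S) (h2 : AR G e₁ e₂ r a b S x y) :
    Phi G w e₁ e₂ r a b i j S x y =
      Wt w e₁ e₂ S * (if alB G e₁ e₂ r b S then i else 1) *
        (if alA G e₁ e₂ r a S then j else 1) :=
  if_pos ⟨h1, h2⟩

theorem Phi_neg {S} {x y : V} (h2 : ¬ AR G e₁ e₂ r a b S x y) :
    Phi G w e₁ e₂ r a b i j S x y = 0 :=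
  if_neg (fun h => h2 h.2)

theorem Phi_negBs {S} {x y : V} (h1 : ¬ Bs G e₁ e₂ r a b S) :
    Phi G w e₁ e₂ r a b i j S x y = 0 :=
  if_neg (fun h => h1 h.1)

/-- The key pointwise skein identity. -/
theorem claim3 (hab : a ≠ b) (c d : V) (S : Finset {e : E // e ≠ e₁ ∧ e ≠ e₂}) :
    Phi G w e₁ e₂ r a b i j S c d =
      Phi G w e₁ e₂ r a b i j S c c - Phi G w e₁ e₂ r a b i j S d c
        + Phi G w e₁ e₂ r a b i j S d d := by
  by_cases hBs : Bs G e₁ e₂ r a b S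
  swap
  · simp [Phi_negBs, hBs]
  by_cases hB : alB G e₁ e₂ r b S
  swap
  · -- no arc out of b : the relation does not depend on x
    have hiff : ∀ x x' y : V, AR G e₁ e₂ r a b S x y ↔ AR G e₁ e₂ r a b S x' y := by
      have key : ∀ x x' y v u, relxy G e₁ e₂ r a b S x y v u →
          relxy G e₁ e₂ r a b S x' y v u := by
        rintro x x' y v u (h | ⟨h, _⟩ | h)
        · exact Or.inl h
        · exact absurd h hB
        · exact Or.inr (Or.inr h)
      intro x x' y
      constructor <;> intro h v <;> exact Relation.ReflTransGen.mono (key _ _ _) _ _ (h v)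
    have e1 : Phi G w e₁ e₂ r a b i j S c d = Phi G w e₁ e₂ r a b i j S d d := by
      unfold Phi; rw [iff_iff_eq.1 (hiff c d d)]
    have e2 : Phi G w e₁ e₂ r a b i j S c c = Phi G w e₁ e₂ r a b i j S d c := by
      unfold Phi; rw [iff_iff_eq.1 (hiff c d c)]
    rw [e1, e2]; ring
  by_cases hA : alA G e₁ e₂ r a S
  swap
  · -- no arc out of a : the relation does not depend on y
    have hiff : ∀ x y y' : V, AR G e₁ e₂ r a b S x y ↔ AR G e₁ e₂ r a b S x y' := by
      have key : ∀ x y y' v u, relxy G e₁ e₂ r a b S x y v u →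
          relxy G e₁ e₂ r a b S x y' v u := by
        rintro x y y' v u (h | h | ⟨h, _⟩)
        · exact Or.inl h
        · exact Or.inr (Or.inl h)
        · exact absurd h hA
      intro x y y'
      constructor <;> intro h v <;> exact Relation.ReflTransGen.mono (key _ _ _) _ _ (h v)
    have e1 : Phi G w e₁ e₂ r a b i j S c d = Phi G w e₁ e₂ r a b i j S c c := by
      unfold Phi; rw [iff_iff_eq.1 (hiff c d c)]
    have e2 : Phi G w e₁ e₂ r a b i j S d c = Phi G w e₁ e₂ r a b i j S d d := by
      unfold Phi; rw [iff_iff_eq.1 (hiff d c d)]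
    rw [e1, e2]; ring
  -- main case : both arcs present
  have har : a ≠ r := hA.2
  have hbr : b ≠ r := hB.2
  have hia : indeg G e₁ e₂ S a = 0 := hA.1
  have hib : indeg G e₁ e₂ S b = 0 := hB.1
  have hir : indeg G e₁ e₂ S r = 0 := hBs.2.1
  set st := sstep G e₁ e₂ S with hst
  have noparent : ∀ v, indeg G e₁ e₂ S v = 0 → ∀ u, ¬ st v u := by
    rintro v hv u ⟨e, he, h1, h2⟩
    have : e ∈ S.filter (fun e => G.tgt e.1 = v) := Finset.mem_filter.2 ⟨he, h1⟩
    rw [Finset.card_eq_zero.1 hv] at this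
    simp at this
  have rootfix : ∀ v z, indeg G e₁ e₂ S v = 0 → Relation.ReflTransGen st v z → v = z := by
    intro v z hv h
    rcases Relation.ReflTransGen.cases_head h with h | ⟨u, h1, _⟩
    · exact h
    · exact absurd h1 (noparent v hv u)
  have hle1 : ∀ v, indeg G e₁ e₂ S v ≤ 1 := by
    intro v
    by_cases h1 : v = r; · rw [h1, hir]; omega
    by_cases h2 : v = a; · rw [h2, hia]; omega
    by_cases h3 : v = b; · rw [h3, hib]; omega
    rw [hBs.1 v h1 h2 h3]
  have uniqpar : ∀ v u u', st v u → st v u' → u = u' := by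
    rintro v u u' ⟨e, he, het, hes⟩ ⟨e', he', het', hes'⟩
    by_cases hee : e = e'
    · rw [← hes, ← hes', hee]
    · exfalso
      have hsub : ({e, e'} : Finset _) ⊆ S.filter (fun e => G.tgt e.1 = v) := by
        intro f hf
        rcases Finset.mem_insert.1 hf with rfl | hf
        · exact Finset.mem_filter.2 ⟨he, het⟩
        · rw [Finset.mem_singleton.1 hf]
          exact Finset.mem_filter.2 ⟨he', het'⟩
      have := Finset.card_le_card hsub
      rw [Finset.card_pair hee] at this
      have := hle1 v
      unfold indeg at this
      omega
  have chain_shift : ∀ v u z, indeg G e₁ e₂ S z = 0 →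
      Relation.ReflTransGen st v z → st v u → Relation.ReflTransGen st u z := by
    intro v u z hz h hvu
    rcases Relation.ReflTransGen.cases_head h with rfl | ⟨u', h1, h2⟩
    · exact absurd hvu (noparent v hz u)
    · rwa [uniqpar v u u' hvu h1]
  -- membership in the full relation implies S-reachability to one of the three roots
  have toGood : ∀ (x y v : V), Relation.ReflTransGen (relxy G e₁ e₂ r a b S x y) v r →
      (Relation.ReflTransGen st v r ∨ Relation.ReflTransGen st v a ∨
        Relation.ReflTransGen st v b) := by
    intro x y v h
    induction h using Relation.ReflTransGen.head_induction_on with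
    | refl => exact Or.inl .refl
    | head hst' _ ih =>
      rename_i p q _
      rcases hst' with h' | ⟨_, rfl, _⟩ | ⟨_, rfl, _⟩
      · rcases ih with h'' | h'' | h''
        · exact Or.inl (h''.head h')
        · exact Or.inr (Or.inl (h''.head h'))
        · exact Or.inr (Or.inr (h''.head h'))
      · exact Or.inr (Or.inr .refl)
      · exact Or.inr (Or.inl .refl)
  -- negation helper
  have NEG : ∀ (x y : V) (Z : V → Prop), (∀ v u, Z v → relxy G e₁ e₂ r a b S x y v u → Z u) →
      ¬ Z r → ∀ v, Z v → ¬ Relation.ReflTransGen (relxy G e₁ e₂ r a b S x y) v r := by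
    intro x y Z hcl hzr v hv h
    revert hv
    induction h using Relation.ReflTransGen.head_induction_on with
    | refl => exact hzr
    | head hst' _ ih => exact fun hz => ih (hcl _ _ hz hst')
  have monoR : ∀ (x y v z : V), Relation.ReflTransGen st v z →
      Relation.ReflTransGen (relxy G e₁ e₂ r a b S x y) v z := by
    intro x y v z h
    exact Relation.ReflTransGen.mono (fun _ _ h' => Or.inl h') _ _ h
  have arcB : ∀ x y : V, relxy G e₁ e₂ r a b S x y b x := fun x y => Or.inr (Or.inl ⟨hB, rfl, rfl⟩)
  have arcA : ∀ x y : V, relxy G e₁ e₂ r a b S x y a y := fun x y => Or.inr (Or.inr ⟨hA, rfl, rfl⟩)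
  -- positive helper
  have posAR : ∀ x y : V, (∀ v, Relation.ReflTransGen st v r ∨ Relation.ReflTransGen st v a ∨
      Relation.ReflTransGen st v b) →
      Relation.ReflTransGen (relxy G e₁ e₂ r a b S x y) a r →
      Relation.ReflTransGen (relxy G e₁ e₂ r a b S x y) b r →
      AR G e₁ e₂ r a b S x y := by
    intro x y hGood hra hrb v
    rcases hGood v with h | h | h
    · exact monoR x y v r h
    · exact (monoR x y v a h).trans hra
    · exact (monoR x y v b h).trans hrb
  -- negative helpers
  have negA : ∀ x y : V, Relation.ReflTransGen st y a →
      ¬ Relation.ReflTransGen (relxy G e₁ e₂ r a b S x y) a r := by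
    intro x y hya
    refine NEG x y (fun v => Relation.ReflTransGen st v a) ?_ ?_ a .refl
    · rintro v u hv (h' | ⟨_, rfl, rfl⟩ | ⟨_, rfl, rfl⟩)
      · exact chain_shift v u a hia hv h'
      · exact absurd (rootfix _ a hib hv).symm hab
      · exact hya
    · intro h; exact har (rootfix r a hir h).symm
  have negB : ∀ x y : V, Relation.ReflTransGen st x b →
      ¬ Relation.ReflTransGen (relxy G e₁ e₂ r a b S x y) b r := by
    intro x y hxb
    refine NEG x y (fun v => Relation.ReflTransGen st v b) ?_ ?_ b .refl
    · rintro v u hv (h' | ⟨_, rfl, rfl⟩ | ⟨_, rfl, rfl⟩)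
      · exact chain_shift v u b hib hv h'
      · exact hxb
      · exact absurd (rootfix _ b hia hv) hab
    · intro h; exact hbr (rootfix r b hir h).symm
  have negCyc : ∀ x y : V, Relation.ReflTransGen st x a → Relation.ReflTransGen st y b →
      ¬ Relation.ReflTransGen (relxy G e₁ e₂ r a b S x y) a r := by
    intro x y hxa hyb
    refine NEG x y (fun v => Relation.ReflTransGen st v a ∨ Relation.ReflTransGen st v b)
      ?_ ?_ a (Or.inl .refl)
    · rintro v u hv (h' | ⟨_, rfl, rfl⟩ | ⟨_, rfl, rfl⟩)
      · rcases hv with hv | hv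
        · exact Or.inl (chain_shift v u a hia hv h')
        · exact Or.inr (chain_shift v u b hib hv h')
      · exact Or.inl hxa
      · exact Or.inr hyb
    · rintro (h | h)
      · exact har (rootfix r a hir h).symm
      · exact hbr (rootfix r b hir h).symm
  have nAR : ∀ x y : V, ¬ Relation.ReflTransGen (relxy G e₁ e₂ r a b S x y) a r →
      ¬ AR G e₁ e₂ r a b S x y := fun x y h h' => h (h' a)
  have nARb : ∀ x y : V, ¬ Relation.ReflTransGen (relxy G e₁ e₂ r a b S x y) b r →
      ¬ AR G e₁ e₂ r a b S x y := fun x y h h' => h (h' b)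
  by_cases hGood : ∀ v, Relation.ReflTransGen st v r ∨ Relation.ReflTransGen st v a ∨
      Relation.ReflTransGen st v b
  swap
  · -- not Good : all four vanish
    have hall : ∀ x y : V, ¬ AR G e₁ e₂ r a b S x y := by
      intro x y h
      exact hGood (fun v => toGood x y v (h v))
    rw [Phi_neg G w e₁ e₂ r a b i j (hall c d), Phi_neg G w e₁ e₂ r a b i j (hall c c),
      Phi_neg G w e₁ e₂ r a b i j (hall d c), Phi_neg G w e₁ e₂ r a b i j (hall d d)]
    ring
  · rcases hGood c with hp | hp | hp <;> rcases hGood d with hq | hq | hq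
    -- (r, r)
    · have hcd : AR G e₁ e₂ r a b S c d := posAR c d hGood
        ((Relation.ReflTransGen.single (arcA c d)).trans (monoR c d d r hq))
        ((Relation.ReflTransGen.single (arcB c d)).trans (monoR c d c r hp))
      have hcc : AR G e₁ e₂ r a b S c c := posAR c c hGood
        ((Relation.ReflTransGen.single (arcA c c)).trans (monoR c c c r hp))
        ((Relation.ReflTransGen.single (arcB c c)).trans (monoR c c c r hp))
      have hdc : AR G e₁ e₂ r a b S d c := posAR d c hGood
        ((Relation.ReflTransGen.single (arcA d c)).trans (monoR d c c r hp))
        ((Relation.ReflTransGen.single (arcB d c)).trans (monoR d c d r hq))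
      have hdd : AR G e₁ e₂ r a b S d d := posAR d d hGood
        ((Relation.ReflTransGen.single (arcA d d)).trans (monoR d d d r hq))
        ((Relation.ReflTransGen.single (arcB d d)).trans (monoR d d d r hq))
      rw [Phi_pos G w e₁ e₂ r a b i j hBs hcd, Phi_pos G w e₁ e₂ r a b i j hBs hcc,
        Phi_pos G w e₁ e₂ r a b i j hBs hdc, Phi_pos G w e₁ e₂ r a b i j hBs hdd]
      ring
    -- (r, a) : c ⇝ r, d ⇝ a
    · have hcd : ¬ AR G e₁ e₂ r a b S c d := nAR c d (negA c d hq)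
      have hcc : AR G e₁ e₂ r a b S c c := posAR c c hGood
        ((Relation.ReflTransGen.single (arcA c c)).trans (monoR c c c r hp))
        ((Relation.ReflTransGen.single (arcB c c)).trans (monoR c c c r hp))
      have hdc : AR G e₁ e₂ r a b S d c := by
        have hra : Relation.ReflTransGen (relxy G e₁ e₂ r a b S d c) a r :=
          (Relation.ReflTransGen.single (arcA d c)).trans (monoR d c c r hp)
        exact posAR d c hGood hra
          ((Relation.ReflTransGen.single (arcB d c)).trans ((monoR d c d a hq).trans hra))
      have hdd : ¬ AR G e₁ e₂ r a b S d d := nAR d d (negA d d hq)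
      rw [Phi_neg G w e₁ e₂ r a b i j hcd, Phi_pos G w e₁ e₂ r a b i j hBs hcc,
        Phi_pos G w e₁ e₂ r a b i j hBs hdc, Phi_neg G w e₁ e₂ r a b i j hdd]
      ring
    -- (r, b) : c ⇝ r, d ⇝ b
    · have hcd : AR G e₁ e₂ r a b S c d := by
        have hrb : Relation.ReflTransGen (relxy G e₁ e₂ r a b S c d) b r :=
          (Relation.ReflTransGen.single (arcB c d)).trans (monoR c d c r hp)
        exact posAR c d hGood
          ((Relation.ReflTransGen.single (arcA c d)).trans ((monoR c d d b hq).trans hrb)) hrb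
      have hcc : AR G e₁ e₂ r a b S c c := posAR c c hGood
        ((Relation.ReflTransGen.single (arcA c c)).trans (monoR c c c r hp))
        ((Relation.ReflTransGen.single (arcB c c)).trans (monoR c c c r hp))
      have hdc : ¬ AR G e₁ e₂ r a b S d c := nARb d c (negB d c hq)
      have hdd : ¬ AR G e₁ e₂ r a b S d d := nARb d d (negB d d hq)
      rw [Phi_pos G w e₁ e₂ r a b i j hBs hcd, Phi_pos G w e₁ e₂ r a b i j hBs hcc,
        Phi_neg G w e₁ e₂ r a b i j hdc, Phi_neg G w e₁ e₂ r a b i j hdd]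
      ring
    -- (a, r) : c ⇝ a, d ⇝ r
    · have hcd : AR G e₁ e₂ r a b S c d := by
        have hra : Relation.ReflTransGen (relxy G e₁ e₂ r a b S c d) a r :=
          (Relation.ReflTransGen.single (arcA c d)).trans (monoR c d d r hq)
        exact posAR c d hGood hra
          ((Relation.ReflTransGen.single (arcB c d)).trans ((monoR c d c a hp).trans hra))
      have hcc : ¬ AR G e₁ e₂ r a b S c c := nAR c c (negA c c hp)
      have hdc : ¬ AR G e₁ e₂ r a b S d c := nAR d c (negA d c hp)
      have hdd : AR G e₁ e₂ r a b S d d := posAR d d hGood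
        ((Relation.ReflTransGen.single (arcA d d)).trans (monoR d d d r hq))
        ((Relation.ReflTransGen.single (arcB d d)).trans (monoR d d d r hq))
      rw [Phi_pos G w e₁ e₂ r a b i j hBs hcd, Phi_neg G w e₁ e₂ r a b i j hcc,
        Phi_neg G w e₁ e₂ r a b i j hdc, Phi_pos G w e₁ e₂ r a b i j hBs hdd]
      ring
    -- (a, a)
    · have hcd : ¬ AR G e₁ e₂ r a b S c d := nAR c d (negA c d hq)
      have hcc : ¬ AR G e₁ e₂ r a b S c c := nAR c c (negA c c hp)
      have hdc : ¬ AR G e₁ e₂ r a b S d c := nAR d c (negA d c hp)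
      have hdd : ¬ AR G e₁ e₂ r a b S d d := nAR d d (negA d d hq)
      rw [Phi_neg G w e₁ e₂ r a b i j hcd, Phi_neg G w e₁ e₂ r a b i j hcc,
        Phi_neg G w e₁ e₂ r a b i j hdc, Phi_neg G w e₁ e₂ r a b i j hdd]
      ring
    -- (a, b) : c ⇝ a, d ⇝ b
    · have hcd : ¬ AR G e₁ e₂ r a b S c d := nAR c d (negCyc c d hp hq)
      have hcc : ¬ AR G e₁ e₂ r a b S c c := nAR c c (negA c c hp)
      have hdc : ¬ AR G e₁ e₂ r a b S d c := nARb d c (negB d c hq)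
      have hdd : ¬ AR G e₁ e₂ r a b S d d := nARb d d (negB d d hq)
      rw [Phi_neg G w e₁ e₂ r a b i j hcd, Phi_neg G w e₁ e₂ r a b i j hcc,
        Phi_neg G w e₁ e₂ r a b i j hdc, Phi_neg G w e₁ e₂ r a b i j hdd]
      ring
    -- (b, r) : c ⇝ b, d ⇝ r
    · have hcd : ¬ AR G e₁ e₂ r a b S c d := nARb c d (negB c d hp)
      have hcc : ¬ AR G e₁ e₂ r a b S c c := nARb c c (negB c c hp)
      have hdc : AR G e₁ e₂ r a b S d c := by
        have hrb : Relation.ReflTransGen (relxy G e₁ e₂ r a b S d c) b r :=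
          (Relation.ReflTransGen.single (arcB d c)).trans (monoR d c d r hq)
        exact posAR d c hGood
          ((Relation.ReflTransGen.single (arcA d c)).trans ((monoR d c c b hp).trans hrb)) hrb
      have hdd : AR G e₁ e₂ r a b S d d := posAR d d hGood
        ((Relation.ReflTransGen.single (arcA d d)).trans (monoR d d d r hq))
        ((Relation.ReflTransGen.single (arcB d d)).trans (monoR d d d r hq))
      rw [Phi_neg G w e₁ e₂ r a b i j hcd, Phi_neg G w e₁ e₂ r a b i j hcc,
        Phi_pos G w e₁ e₂ r a b i j hBs hdc, Phi_pos G w e₁ e₂ r a b i j hBs hdd]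
      ring
    -- (b, a) : c ⇝ b, d ⇝ a
    · have hcd : ¬ AR G e₁ e₂ r a b S c d := nARb c d (negB c d hp)
      have hcc : ¬ AR G e₁ e₂ r a b S c c := nARb c c (negB c c hp)
      have hdc : ¬ AR G e₁ e₂ r a b S d c := nAR d c (negCyc d c hq hp)
      have hdd : ¬ AR G e₁ e₂ r a b S d d := nAR d d (negA d d hq)
      rw [Phi_neg G w e₁ e₂ r a b i j hcd, Phi_neg G w e₁ e₂ r a b i j hcc,
        Phi_neg G w e₁ e₂ r a b i j hdc, Phi_neg G w e₁ e₂ r a b i j hdd]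
      ring
    -- (b, b)
    · have hcd : ¬ AR G e₁ e₂ r a b S c d := nARb c d (negB c d hp)
      have hcc : ¬ AR G e₁ e₂ r a b S c c := nARb c c (negB c c hp)
      have hdc : ¬ AR G e₁ e₂ r a b S d c := nARb d c (negB d c hq)
      have hdd : ¬ AR G e₁ e₂ r a b S d d := nARb d d (negB d d hq)
      rw [Phi_neg G w e₁ e₂ r a b i j hcd, Phi_neg G w e₁ e₂ r a b i j hcc,
        Phi_neg G w e₁ e₂ r a b i j hdc, Phi_neg G w e₁ e₂ r a b i j hdd]
      ring

end Main

section Claim0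

open Classical Relation Finset Sum
set_option linter.unusedSectionVars false
set_option maxHeartbeats 1000000

theorem card_filter_sum_univ {γ : Type} [Fintype γ] [DecidableEq γ]
    (U : Finset γ) (p : γ → Prop) [DecidablePred p] :
    (U.filter p).card = ∑ k : γ, if k ∈ U ∧ p k then 1 else 0 := by
  rw [Finset.card_filter]
  have h := Finset.sum_ite_mem Finset.univ U (fun k => if p k then 1 else 0)
  rw [Finset.univ_inter] at h
  rw [← h]
  exact Finset.sum_congr rfl fun k _ => by rw [ite_and]

variable {V E : Type} [Fintype V] [Fintype E] [DecidableEq V] [DecidableEq E]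

/-- The original graph with relabelled edges. -/
noncomputable def G0 (G : Multidigraph V E) (e₁ e₂ : E) (a b c d : V) :
    Multidigraph V ({e : E // e ≠ e₁ ∧ e ≠ e₂} ⊕ Fin 2) where
  src := Sum.elim (fun e => G.src e.1) ![c, d]
  tgt := Sum.elim (fun e => G.tgt e.1) ![b, a]

variable (G : Multidigraph V E) (w : E → ℤ) (e₁ e₂ : E) (r a b c d : V) (i j : ℤ)

theorem claim0 (hab : a ≠ b) :
    treeCount (G0 G e₁ e₂ a b c d) (Sum.elim (fun e => w e.1) ![i, j]) r
      = ∑ S : Finset {e : E // e ≠ e₁ ∧ e ≠ e₂}, Phi G w e₁ e₂ r a b i j S c d := by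
  unfold treeCount
  rw [sum_finset_disjSum]
  refine Finset.sum_congr rfl fun S _ => ?_
  set U₀ : Finset (Fin 2) :=
    (if alB G e₁ e₂ r b S then ({0} : Finset (Fin 2)) else ∅)
      ∪ (if alA G e₁ e₂ r a S then ({1} : Finset (Fin 2)) else ∅) with hU₀
  have h0U : ((0 : Fin 2) ∈ U₀) ↔ alB G e₁ e₂ r b S := by
    by_cases h : alB G e₁ e₂ r b S <;> by_cases h' : alA G e₁ e₂ r a S <;>
      simp [hU₀, h, h']
  have h1U : ((1 : Fin 2) ∈ U₀) ↔ alA G e₁ e₂ r a S := by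
    by_cases h : alB G e₁ e₂ r b S <;> by_cases h' : alA G e₁ e₂ r a S <;>
      simp [hU₀, h, h']
  have hindeg : ∀ (U : Finset (Fin 2)) (v : V),
      ((S.disjSum U).filter (fun e => (G0 G e₁ e₂ a b c d).tgt e = v)).card
        = indeg G e₁ e₂ S v
          + ((if (0 : Fin 2) ∈ U ∧ b = v then 1 else 0)
            + (if (1 : Fin 2) ∈ U ∧ a = v then 1 else 0)) := by
    intro U v
    rw [filter_disjSum_card]
    congr 1
    rw [card_filter_sum_univ, Fin.sum_univ_two]
    have e0 : (G0 G e₁ e₂ a b c d).tgt (Sum.inr 0) = b := rfl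
    have e1 : (G0 G e₁ e₂ a b c d).tgt (Sum.inr 1) = a := rfl
    rw [e0, e1]
  -- all nonzero terms have U = U₀
  have force : ∀ U : Finset (Fin 2),
      IsOrientedSpanningTree (G0 G e₁ e₂ a b c d) r (S.disjSum U) → U = U₀ := by
    rintro U ⟨h1, h0, -⟩
    have H : ∀ v : V, v ≠ r → indeg G e₁ e₂ S v
        + ((if (0 : Fin 2) ∈ U ∧ b = v then 1 else 0)
          + (if (1 : Fin 2) ∈ U ∧ a = v then 1 else 0)) = 1 := by
      intro v hv; rw [← hindeg U v]; exact h1 v hv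
    have H0 : indeg G e₁ e₂ S r
        + ((if (0 : Fin 2) ∈ U ∧ b = r then 1 else 0)
          + (if (1 : Fin 2) ∈ U ∧ a = r then 1 else 0)) = 0 := by
      rw [← hindeg U r]; exact h0
    ext k
    fin_cases k
    · show ((0 : Fin 2) ∈ U) ↔ ((0 : Fin 2) ∈ U₀)
      rw [h0U]
      unfold alB
      by_cases hbr : b = r
      · subst hbr
        by_cases hm : (0 : Fin 2) ∈ U <;> simp_all <;> omega
      · have := H b hbr
        by_cases hm : (0 : Fin 2) ∈ U <;> simp_all [Ne.symm hab] <;> omega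
    · show ((1 : Fin 2) ∈ U) ↔ ((1 : Fin 2) ∈ U₀)
      rw [h1U]
      unfold alA
      by_cases har : a = r
      · subst har
        by_cases hm : (1 : Fin 2) ∈ U <;> simp_all <;> omega
      · have := H a har
        by_cases hm : (1 : Fin 2) ∈ U <;> simp_all [hab, Ne.symm hab] <;> omega
  -- the relation of the completed edge set is the abstract one
  have hrel : ∀ v u : V, mstep (G0 G e₁ e₂ a b c d) (S.disjSum U₀) v u ↔
      relxy G e₁ e₂ r a b S c d v u := by
    intro v u
    rw [mstep_disjSum]
    unfold relxy sstep
    constructor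
    · rintro (⟨e, he, h1', h2'⟩ | ⟨k, hk, h1', h2'⟩)
      · exact Or.inl ⟨e, he, by simpa [G0] using h1', by simpa [G0] using h2'⟩
      · fin_cases k
        · refine Or.inr (Or.inl ⟨h0U.1 hk, ?_, ?_⟩) <;> simp_all [G0]
        · refine Or.inr (Or.inr ⟨h1U.1 hk, ?_, ?_⟩) <;> simp_all [G0]
    · rintro (⟨e, he, h1', h2'⟩ | ⟨hB, rfl, rfl⟩ | ⟨hA, rfl, rfl⟩)
      · exact Or.inl ⟨e, he, by simpa [G0] using h1', by simpa [G0] using h2'⟩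
      · exact Or.inr ⟨0, h0U.2 hB, by simp [G0], by simp [G0]⟩
      · exact Or.inr ⟨1, h1U.2 hA, by simp [G0], by simp [G0]⟩
  -- the main iff
  have hiff : IsOrientedSpanningTree (G0 G e₁ e₂ a b c d) r (S.disjSum U₀) ↔
      Bs G e₁ e₂ r a b S ∧ AR G e₁ e₂ r a b S c d := by
    rw [ist_iff_reach]
    constructor
    · rintro ⟨h1, h0, hre⟩
      have H : ∀ v : V, v ≠ r → indeg G e₁ e₂ S v
          + ((if (0 : Fin 2) ∈ U₀ ∧ b = v then 1 else 0)
            + (if (1 : Fin 2) ∈ U₀ ∧ a = v then 1 else 0)) = 1 := by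
        intro v hv; rw [← hindeg U₀ v]; exact h1 v hv
      have H0 : indeg G e₁ e₂ S r
          + ((if (0 : Fin 2) ∈ U₀ ∧ b = r then 1 else 0)
            + (if (1 : Fin 2) ∈ U₀ ∧ a = r then 1 else 0)) = 0 := by
        rw [← hindeg U₀ r]; exact h0
      have hr0 : indeg G e₁ e₂ S r = 0 := by
        by_cases h0m : (0 : Fin 2) ∈ U₀ ∧ b = r <;>
          by_cases h1m : (1 : Fin 2) ∈ U₀ ∧ a = r <;>
          simp [h0m, h1m] at H0 <;> omega
      refine ⟨⟨?_, hr0, ?_, ?_⟩, ?_⟩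
      · intro v h1' h2' h3'
        have := H v h1'
        simp [Ne.symm h2', Ne.symm h3'] at this
        exact this
      · by_cases har : a = r
        · rw [har, hr0]; omega
        · have := H a har
          by_cases h0m : (0 : Fin 2) ∈ U₀ ∧ b = a <;>
            by_cases h1m : (1 : Fin 2) ∈ U₀ ∧ a = a <;>
            simp [h0m, h1m] at this <;> omega
      · by_cases hbr : b = r
        · rw [hbr, hr0]; omega
        · have := H b hbr
          by_cases h0m : (0 : Fin 2) ∈ U₀ ∧ b = b <;>
            by_cases h1m : (1 : Fin 2) ∈ U₀ ∧ a = b <;>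
            simp [h0m, h1m] at this <;> omega
      · intro v
        exact Relation.ReflTransGen.mono (fun x y h => (hrel x y).1 h) _ _ (hre v)
    · rintro ⟨hBs, hAR⟩
      have hir := hBs.2.1
      refine ⟨?_, ?_, ?_⟩
      · intro v hv
        rw [hindeg U₀ v]
        by_cases hva : v = a
        · rw [hva] at hv ⊢
          have hA : alA G e₁ e₂ r a S ↔ indeg G e₁ e₂ S a = 0 := by
            unfold alA; simp [hv]
          by_cases hz : indeg G e₁ e₂ S a = 0
          · rw [if_neg (fun h => hab h.2.symm), if_pos ⟨h1U.2 (hA.2 hz), rfl⟩]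
            omega
          · rw [if_neg (fun h => hab h.2.symm),
              if_neg (fun h => hz (hA.1 (h1U.1 h.1)))]
            have := hBs.2.2.1
            omega
        · by_cases hvb : v = b
          · rw [hvb] at hv ⊢
            have hB : alB G e₁ e₂ r b S ↔ indeg G e₁ e₂ S b = 0 := by
              unfold alB; simp [hv]
            by_cases hz : indeg G e₁ e₂ S b = 0
            · rw [if_pos ⟨h0U.2 (hB.2 hz), rfl⟩, if_neg (fun h => hab h.2)]
              omega
            · rw [if_neg (fun h => hz (hB.1 (h0U.1 h.1))),
                if_neg (fun h => hab h.2)]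
              have := hBs.2.2.2
              omega
          · rw [if_neg (fun h => hvb h.2.symm), if_neg (fun h => hva h.2.symm)]
            have := hBs.1 v hv hva hvb
            omega
      · rw [hindeg U₀ r]
        rw [if_neg (fun h => (h0U.1 h.1).2 h.2), if_neg (fun h => (h1U.1 h.1).2 h.2)]
        omega
      · intro v
        exact Relation.ReflTransGen.mono (fun x y h => (hrel x y).2 h) _ _ (hAR v)
  rw [Finset.sum_eq_single U₀
    (fun U _ hne => if_neg (fun h => hne (force U h)))
    (fun h => absurd (Finset.mem_univ _) h)]
  unfold Phi
  rw [if_congr hiff rfl rfl]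
  congr 1
  rw [Finset.prod_disjSum]
  unfold Wt
  by_cases hB : alB G e₁ e₂ r b S <;> by_cases hA : alA G e₁ e₂ r a S <;>
    simp [hU₀, hB, hA, show ({0} ∪ {1} : Finset (Fin 2)) = {0, 1} by decide,
      Finset.prod_insert, Finset.prod_singleton] <;> ring

end Claim0

section Claim2

open Classical Relation Finset Sum
set_option linter.unusedSectionVars false
set_option linter.unreachableTactic false
set_option linter.unusedTactic false
set_option linter.unnecessarySeqFocus false
set_option maxHeartbeats 2000000

variable {V E : Type} [Fintype V] [Fintype E] [DecidableEq V] [DecidableEq E]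
variable (G : Multidigraph V E) (w : E → ℤ) (e₁ e₂ : E) (r a b c d : V) (i j : ℤ)

theorem claim2 (hab : a ≠ b) :
    treeCount (Gamma2 G e₁ e₂ a b c d) (weight2 w e₁ e₂ i j) (Sum.inl r)
      = ∑ S : Finset {e : E // e ≠ e₁ ∧ e ≠ e₂},
          (i * (i + j) * Phi G w e₁ e₂ r a b i j S c c
            + j * (i + j) * Phi G w e₁ e₂ r a b i j S d d) := by
  unfold treeCount
  rw [sum_finset_disjSum]
  refine Finset.sum_congr rfl fun S _ => ?_
  set WW : Finset (Fin 5) :=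
    (if alA G e₁ e₂ r a S then ({3} : Finset (Fin 5)) else ∅)
      ∪ (if alB G e₁ e₂ r b S then ({4} : Finset (Fin 5)) else ∅) with hWW
  set Uc : Finset (Fin 5) := insert 0 (insert 2 WW) with hUc
  set Ud : Finset (Fin 5) := insert 1 (insert 2 WW) with hUd
  have hWmem : ∀ k : Fin 5, k ∈ WW ↔
      ((alA G e₁ e₂ r a S ∧ k = 3) ∨ (alB G e₁ e₂ r b S ∧ k = 4)) := by
    intro k
    by_cases h : alA G e₁ e₂ r a S <;> by_cases h' : alB G e₁ e₂ r b S <;>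
      simp [hWW, h, h']
  -- targets of the five new edges
  have t0 : (Gamma2 G e₁ e₂ a b c d).tgt (Sum.inr 0) = Sum.inr 0 := rfl
  have t1 : (Gamma2 G e₁ e₂ a b c d).tgt (Sum.inr 1) = Sum.inr 0 := rfl
  have t2 : (Gamma2 G e₁ e₂ a b c d).tgt (Sum.inr 2) = Sum.inr 1 := rfl
  have t3 : (Gamma2 G e₁ e₂ a b c d).tgt (Sum.inr 3) = Sum.inl a := rfl
  have t4 : (Gamma2 G e₁ e₂ a b c d).tgt (Sum.inr 4) = Sum.inl b := rfl
  have s0 : (Gamma2 G e₁ e₂ a b c d).src (Sum.inr 0) = Sum.inl c := rfl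
  have s1 : (Gamma2 G e₁ e₂ a b c d).src (Sum.inr 1) = Sum.inl d := rfl
  have s2 : (Gamma2 G e₁ e₂ a b c d).src (Sum.inr 2) = Sum.inr 0 := rfl
  have s3 : (Gamma2 G e₁ e₂ a b c d).src (Sum.inr 3) = Sum.inr 1 := rfl
  have s4 : (Gamma2 G e₁ e₂ a b c d).src (Sum.inr 4) = Sum.inr 1 := rfl
  -- in-degree bookkeeping
  have hindL : ∀ (U : Finset (Fin 5)) (v : V),
      ((S.disjSum U).filter
          (fun e => (Gamma2 G e₁ e₂ a b c d).tgt e = Sum.inl v)).card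
        = indeg G e₁ e₂ S v + ((if (3 : Fin 5) ∈ U ∧ a = v then 1 else 0)
            + (if (4 : Fin 5) ∈ U ∧ b = v then 1 else 0)) := by
    intro U v
    rw [filter_disjSum_card]
    have hS : (S.filter
        (fun k => (Gamma2 G e₁ e₂ a b c d).tgt (Sum.inl k) = Sum.inl v)).card
        = indeg G e₁ e₂ S v := by
      unfold indeg
      congr 1
      ext e
      simp [Gamma2]
    rw [hS, card_filter_sum_univ, Fin.sum_univ_five]
    simp only [t0, t1, t2, t3, t4]
    simp [Sum.inl.injEq]
  have hind0 : ∀ (U : Finset (Fin 5)),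
      ((S.disjSum U).filter
          (fun e => (Gamma2 G e₁ e₂ a b c d).tgt e = Sum.inr 0)).card
        = (if (0 : Fin 5) ∈ U then 1 else 0) + (if (1 : Fin 5) ∈ U then 1 else 0) := by
    intro U
    rw [filter_disjSum_card]
    have hS : (S.filter
        (fun k => (Gamma2 G e₁ e₂ a b c d).tgt (Sum.inl k) = Sum.inr 0)).card = 0 := by
      simp [Finset.card_eq_zero, Finset.filter_eq_empty_iff, Gamma2]
    rw [hS, card_filter_sum_univ, Fin.sum_univ_five]
    simp only [t0, t1, t2, t3, t4]
    simp
  have hind1 : ∀ (U : Finset (Fin 5)),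
      ((S.disjSum U).filter
          (fun e => (Gamma2 G e₁ e₂ a b c d).tgt e = Sum.inr 1)).card
        = (if (2 : Fin 5) ∈ U then 1 else 0) := by
    intro U
    rw [filter_disjSum_card]
    have hS : (S.filter
        (fun k => (Gamma2 G e₁ e₂ a b c d).tgt (Sum.inl k) = Sum.inr 1)).card = 0 := by
      simp [Finset.card_eq_zero, Finset.filter_eq_empty_iff, Gamma2]
    rw [hS, card_filter_sum_univ, Fin.sum_univ_five]
    simp only [t0, t1, t2, t3, t4]
    simp
  -- forcing the new part
  have force : ∀ U : Finset (Fin 5),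
      IsOrientedSpanningTree (Gamma2 G e₁ e₂ a b c d) (Sum.inl r) (S.disjSum U) →
        U = Uc ∨ U = Ud := by
    rintro U ⟨h1, h0, -⟩
    have H2 : (2 : Fin 5) ∈ U := by
      have := h1 (Sum.inr 1) (by simp)
      rw [hind1 U] at this
      by_cases hm : (2 : Fin 5) ∈ U <;> simp [hm] at this ⊢
    have H01 : ((0 : Fin 5) ∈ U ∧ (1 : Fin 5) ∉ U) ∨ ((0 : Fin 5) ∉ U ∧ (1 : Fin 5) ∈ U) := by
      have := h1 (Sum.inr 0) (by simp)
      rw [hind0 U] at this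
      by_cases hm : (0 : Fin 5) ∈ U <;> by_cases hm' : (1 : Fin 5) ∈ U <;>
        simp [hm, hm'] at this ⊢
    have H3 : ((3 : Fin 5) ∈ U) ↔ alA G e₁ e₂ r a S := by
      unfold alA
      by_cases har : a = r
      · have := h0
        rw [show Sum.inl r = Sum.inl a by rw [har]] at this
        rw [hindL U a] at this
        by_cases hm : (3 : Fin 5) ∈ U <;> simp [hm, har] at this ⊢ <;> omega
      · have := h1 (Sum.inl a) (by simp [har])
        rw [hindL U a] at this
        by_cases hm : (3 : Fin 5) ∈ U <;>
          simp [hm, har, Ne.symm hab] at this ⊢ <;> omega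
    have H4 : ((4 : Fin 5) ∈ U) ↔ alB G e₁ e₂ r b S := by
      unfold alB
      by_cases hbr : b = r
      · have := h0
        rw [show Sum.inl r = Sum.inl b by rw [hbr]] at this
        rw [hindL U b] at this
        by_cases hm : (4 : Fin 5) ∈ U <;> simp [hm, hbr] at this ⊢ <;> omega
      · have := h1 (Sum.inl b) (by simp [hbr])
        rw [hindL U b] at this
        by_cases hm : (4 : Fin 5) ∈ U <;>
          simp [hm, hbr, hab] at this ⊢ <;> omega
    rcases H01 with ⟨h0m, h1m⟩ | ⟨h0m, h1m⟩
    · left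
      ext k
      simp only [hUc, Finset.mem_insert, hWmem]
      fin_cases k <;>
        simp_all (config := { decide := true }) [H2, H3, H4, h0m, h1m]
    · right
      ext k
      simp only [hUd, Finset.mem_insert, hWmem]
      fin_cases k <;>
        simp_all (config := { decide := true }) [H2, H3, H4, h0m, h1m]
  -- membership facts for the candidates
  have hc0 : (0 : Fin 5) ∈ Uc := by simp [hUc]
  have hc2 : (2 : Fin 5) ∈ Uc := by simp [hUc]
  have hc1 : (1 : Fin 5) ∉ Uc := by
    simp [hUc, hWmem]
  have hc3 : (3 : Fin 5) ∈ Uc ↔ alA G e₁ e₂ r a S := by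
    simp [hUc, hWmem]
  have hc4 : (4 : Fin 5) ∈ Uc ↔ alB G e₁ e₂ r b S := by
    simp [hUc, hWmem]
  have hd1 : (1 : Fin 5) ∈ Ud := by simp [hUd]
  have hd2 : (2 : Fin 5) ∈ Ud := by simp [hUd]
  have hd0 : (0 : Fin 5) ∉ Ud := by
    simp [hUd, hWmem]
  have hd3 : (3 : Fin 5) ∈ Ud ↔ alA G e₁ e₂ r a S := by
    simp [hUd, hWmem]
  have hd4 : (4 : Fin 5) ∈ Ud ↔ alB G e₁ e₂ r b S := by
    simp [hUd, hWmem]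
  -- the generic candidate analysis
  have candidate : ∀ (U₀ : Finset (Fin 5)) (z : V),
      ((0 : Fin 5) ∈ U₀ ∧ (Gamma2 G e₁ e₂ a b c d).src (Sum.inr 0) = Sum.inl z ∨
       (1 : Fin 5) ∈ U₀ ∧ (Gamma2 G e₁ e₂ a b c d).src (Sum.inr 1) = Sum.inl z) →
      ((0 : Fin 5) ∈ U₀ → (1 : Fin 5) ∉ U₀) →
      ((1 : Fin 5) ∈ U₀ → (0 : Fin 5) ∉ U₀) →
      ((0 : Fin 5) ∈ U₀ ∨ (1 : Fin 5) ∈ U₀) →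
      ((2 : Fin 5) ∈ U₀) →
      ((3 : Fin 5) ∈ U₀ ↔ alA G e₁ e₂ r a S) →
      ((4 : Fin 5) ∈ U₀ ↔ alB G e₁ e₂ r b S) →
      (IsOrientedSpanningTree (Gamma2 G e₁ e₂ a b c d) (Sum.inl r) (S.disjSum U₀) ↔
        Bs G e₁ e₂ r a b S ∧ AR G e₁ e₂ r a b S z z) := by
    intro U₀ z hz h01 h10 h01' h2m h3m h4m
    have hsz : ∀ k : Fin 5, k ∈ U₀ → k = 0 ∨ k = 1 →
        (Gamma2 G e₁ e₂ a b c d).src (Sum.inr k) = Sum.inl z := by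
      rintro k hk (rfl | rfl)
      · rcases hz with ⟨_, h⟩ | ⟨h, _⟩
        · exact h
        · exact absurd hk (h10 h)
      · rcases hz with ⟨h, _⟩ | ⟨_, h⟩
        · exact absurd hk (h01 h)
        · exact h
    -- forward projection
    set π : V ⊕ Fin 2 → V := Sum.elim id (fun _ => z) with hπ
    rw [ist_iff_reach]
    constructor
    · rintro ⟨h1, h0, hre⟩
      have hr0 : indeg G e₁ e₂ S r = 0 := by
        have := h0
        rw [hindL U₀ r] at this
        omega
      constructor
      · refine ⟨?_, hr0, ?_, ?_⟩
        · intro v h1' h2' h3'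
          have := h1 (Sum.inl v) (by simp [h1'])
          rw [hindL U₀ v] at this
          simp [Ne.symm h2', Ne.symm h3'] at this
          exact this
        · by_cases har : a = r
          · rw [har, hr0]; omega
          · have := h1 (Sum.inl a) (by simp [har])
            rw [hindL U₀ a] at this
            by_cases h0m : (3 : Fin 5) ∈ U₀ ∧ a = a <;>
              by_cases h1m : (4 : Fin 5) ∈ U₀ ∧ b = a <;>
              simp only [h0m, h1m, if_true, if_false] at this <;> omega
        · by_cases hbr : b = r
          · rw [hbr, hr0]; omega
          · have := h1 (Sum.inl b) (by simp [hbr])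
            rw [hindL U₀ b] at this
            by_cases h0m : (3 : Fin 5) ∈ U₀ ∧ a = b <;>
              by_cases h1m : (4 : Fin 5) ∈ U₀ ∧ b = b <;>
              simp only [h0m, h1m, if_true, if_false] at this <;> omega
      · -- reachability: project
        intro v
        have hfwd : ∀ x y, mstep (Gamma2 G e₁ e₂ a b c d) (S.disjSum U₀) x y →
            Relation.ReflTransGen (relxy G e₁ e₂ r a b S z z) (π x) (π y) := by
          have hk5 : ∀ k : Fin 5, k = 0 ∨ k = 1 ∨ k = 2 ∨ k = 3 ∨ k = 4 := by decide
          rintro x y ⟨e, he, hte, hse⟩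
          rcases e with e | k
          · have heS : e ∈ S := Finset.inl_mem_disjSum.1 he
            refine Relation.ReflTransGen.single (Or.inl ⟨e, heS, ?_, ?_⟩)
            · rw [← hte]; rfl
            · rw [← hse]; rfl
          · have hk : k ∈ U₀ := Finset.inr_mem_disjSum.1 he
            rcases hk5 k with rfl | rfl | rfl | rfl | rfl
            · rw [← hte, ← hse, t0, hsz 0 hk (Or.inl rfl)]
              exact Relation.ReflTransGen.refl
            · rw [← hte, ← hse, t1, hsz 1 hk (Or.inr rfl)]
              exact Relation.ReflTransGen.refl
            · rw [← hte, ← hse, t2, s2]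
              exact Relation.ReflTransGen.refl
            · rw [← hte, ← hse, t3, s3]
              exact Relation.ReflTransGen.single
                (Or.inr (Or.inr ⟨h3m.1 hk, rfl, rfl⟩))
            · rw [← hte, ← hse, t4, s4]
              exact Relation.ReflTransGen.single
                (Or.inr (Or.inl ⟨h4m.1 hk, rfl, rfl⟩))
        have := Relation.ReflTransGen.lift' π hfwd _ _ (hre (Sum.inl v))
        simpa [hπ, Function.onFun] using this
    · rintro ⟨hBs, hAR⟩
      have hir := hBs.2.1
      refine ⟨?_, ?_, ?_⟩
      · intro x hx
        rcases x with v | k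
        · have hvr : v ≠ r := by rintro rfl; exact hx rfl
          rw [hindL U₀ v]
          by_cases hva : v = a
          · rw [hva] at hvr ⊢
            have hA' : alA G e₁ e₂ r a S ↔ indeg G e₁ e₂ S a = 0 := by
              unfold alA; simp [hvr]
            by_cases hzz : indeg G e₁ e₂ S a = 0
            · rw [if_pos ⟨h3m.2 (hA'.2 hzz), rfl⟩, if_neg (fun h => hab h.2.symm)]
              omega
            · rw [if_neg (fun h => hzz (hA'.1 (h3m.1 h.1))), if_neg (fun h => hab h.2.symm)]
              have := hBs.2.2.1
              omega
          · by_cases hvb : v = b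
            · rw [hvb] at hvr ⊢
              have hB' : alB G e₁ e₂ r b S ↔ indeg G e₁ e₂ S b = 0 := by
                unfold alB; simp [hvr]
              by_cases hzz : indeg G e₁ e₂ S b = 0
              · rw [if_neg (fun h => hab h.2), if_pos ⟨h4m.2 (hB'.2 hzz), rfl⟩]
                omega
              · rw [if_neg (fun h => hab h.2),
                  if_neg (fun h => hzz (hB'.1 (h4m.1 h.1)))]
                have := hBs.2.2.2
                omega
            · rw [if_neg (fun h => hva h.2.symm), if_neg (fun h => hvb h.2.symm)]
              have := hBs.1 v hvr hva hvb
              omega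
        · have hk2 : ∀ k : Fin 2, k = 0 ∨ k = 1 := by decide
          rcases hk2 k with rfl | rfl
          · rw [hind0 U₀]
            rcases h01' with hm | hm
            · rw [if_pos hm, if_neg (h01 hm)]
            · rw [if_neg (h10 hm), if_pos hm]
          · rw [hind1 U₀, if_pos h2m]
      · rw [hindL U₀ r]
        rw [hir, if_neg (fun h => (h3m.1 h.1).2 h.2), if_neg (fun h => (h4m.1 h.1).2 h.2)]
      · -- reachability: lift
        have hVreach : ∀ v : V, Relation.ReflTransGen
            (mstep (Gamma2 G e₁ e₂ a b c d) (S.disjSum U₀)) (Sum.inl v) (Sum.inl r) := by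
          intro v
          have hbwd : ∀ p q : V, relxy G e₁ e₂ r a b S z z p q →
              Relation.ReflTransGen (mstep (Gamma2 G e₁ e₂ a b c d) (S.disjSum U₀))
                (Sum.inl p) (Sum.inl q) := by
            rintro p q (⟨e, he, h1', h2'⟩ | ⟨hB', hp, hq⟩ | ⟨hA', hp, hq⟩)
            · refine Relation.ReflTransGen.single
                ⟨Sum.inl e, by simp [he], ?_, ?_⟩
              · show Sum.inl (G.tgt e.1) = Sum.inl p; rw [h1']
              · show Sum.inl (G.src e.1) = Sum.inl q; rw [h2']
            · rw [hp, hq]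
               -- b steps to v₂ (edge 4), v₂ to v₁ (edge 2), v₁ to z (edge 0/1)
              have st1 : mstep (Gamma2 G e₁ e₂ a b c d) (S.disjSum U₀)
                  (Sum.inl b) (Sum.inr 1) :=
                ⟨Sum.inr 4, by simp [h4m.2 hB'], t4, s4⟩
              have st2 : mstep (Gamma2 G e₁ e₂ a b c d) (S.disjSum U₀)
                  (Sum.inr 1) (Sum.inr 0) :=
                ⟨Sum.inr 2, by simp [h2m], t2, s2⟩
              have st3 : mstep (Gamma2 G e₁ e₂ a b c d) (S.disjSum U₀)
                  (Sum.inr 0) (Sum.inl z) := by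
                rcases h01' with hm | hm
                · exact ⟨Sum.inr 0, by simp [hm], t0, hsz 0 hm (Or.inl rfl)⟩
                · exact ⟨Sum.inr 1, by simp [hm], t1, hsz 1 hm (Or.inr rfl)⟩
              exact ((Relation.ReflTransGen.single st1).tail st2).tail st3
            · rw [hp, hq]
              have st1 : mstep (Gamma2 G e₁ e₂ a b c d) (S.disjSum U₀)
                  (Sum.inl a) (Sum.inr 1) :=
                ⟨Sum.inr 3, by simp [h3m.2 hA'], t3, s3⟩
              have st2 : mstep (Gamma2 G e₁ e₂ a b c d) (S.disjSum U₀)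
                  (Sum.inr 1) (Sum.inr 0) :=
                ⟨Sum.inr 2, by simp [h2m], t2, s2⟩
              have st3 : mstep (Gamma2 G e₁ e₂ a b c d) (S.disjSum U₀)
                  (Sum.inr 0) (Sum.inl z) := by
                rcases h01' with hm | hm
                · exact ⟨Sum.inr 0, by simp [hm], t0, hsz 0 hm (Or.inl rfl)⟩
                · exact ⟨Sum.inr 1, by simp [hm], t1, hsz 1 hm (Or.inr rfl)⟩
              exact ((Relation.ReflTransGen.single st1).tail st2).tail st3
          exact Relation.ReflTransGen.lift' Sum.inl hbwd _ _ (hAR v)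
        intro x
        rcases x with v | k
        · exact hVreach v
        · have st3 : mstep (Gamma2 G e₁ e₂ a b c d) (S.disjSum U₀)
              (Sum.inr 0) (Sum.inl z) := by
            rcases h01' with hm | hm
            · exact ⟨Sum.inr 0, by simp [hm], t0, hsz 0 hm (Or.inl rfl)⟩
            · exact ⟨Sum.inr 1, by simp [hm], t1, hsz 1 hm (Or.inr rfl)⟩
          have st2 : mstep (Gamma2 G e₁ e₂ a b c d) (S.disjSum U₀)
              (Sum.inr 1) (Sum.inr 0) :=
            ⟨Sum.inr 2, by simp [h2m], t2, s2⟩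
          have hk2 : ∀ k : Fin 2, k = 0 ∨ k = 1 := by decide
          rcases hk2 k with rfl | rfl
          · exact (Relation.ReflTransGen.single st3).trans (hVreach z)
          · exact ((Relation.ReflTransGen.single st2).tail st3).trans (hVreach z)
  have hiffc := candidate Uc c (Or.inl ⟨hc0, s0⟩) (fun _ => hc1) (fun h => absurd h hc1)
    (Or.inl hc0) hc2 hc3 hc4
  have hiffd := candidate Ud d (Or.inr ⟨hd1, s1⟩) (fun h => absurd h hd0) (fun _ => hd0)
    (Or.inr hd1) hd2 hd3 hd4
  -- products
  have hprodW : ∀ kk : Fin 5, ∀ x : ℤ, weight2 w e₁ e₂ i j (Sum.inr kk) = x →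
      True := fun _ _ _ => trivial
  have hprodc : ∏ e ∈ S.disjSum Uc, weight2 w e₁ e₂ i j e
      = Wt w e₁ e₂ S * (i * (i + j)
          * ((if alB G e₁ e₂ r b S then i else 1) * (if alA G e₁ e₂ r a S then j else 1))) := by
    rw [Finset.prod_disjSum]
    unfold Wt
    congr 1
    by_cases hA : alA G e₁ e₂ r a S <;> by_cases hB : alB G e₁ e₂ r b S <;>
      simp [hUc, hWW, hA, hB, weight2, Finset.prod_insert, Finset.prod_singleton,
        show ({3} ∪ {4} : Finset (Fin 5)) = {3, 4} by decide,
        show (∅ ∪ {4} : Finset (Fin 5)) = {4} by decide,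
        show ({3} ∪ ∅ : Finset (Fin 5)) = {3} by decide] <;> ring
  have hprodd : ∏ e ∈ S.disjSum Ud, weight2 w e₁ e₂ i j e
      = Wt w e₁ e₂ S * (j * (i + j)
          * ((if alB G e₁ e₂ r b S then i else 1) * (if alA G e₁ e₂ r a S then j else 1))) := by
    rw [Finset.prod_disjSum]
    unfold Wt
    congr 1
    by_cases hA : alA G e₁ e₂ r a S <;> by_cases hB : alB G e₁ e₂ r b S <;>
      simp [hUd, hWW, hA, hB, weight2, Finset.prod_insert, Finset.prod_singleton,
        show ({3} ∪ {4} : Finset (Fin 5)) = {3, 4} by decide,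
        show (∅ ∪ {4} : Finset (Fin 5)) = {4} by decide,
        show ({3} ∪ ∅ : Finset (Fin 5)) = {3} by decide] <;> ring
  -- assemble
  have hne : Uc ≠ Ud := by
    intro h
    exact hd0 (h ▸ hc0)
  rw [show (Finset.univ : Finset (Finset (Fin 5))) =
    Finset.univ from rfl]
  rw [← Finset.sum_subset (Finset.subset_univ ({Uc, Ud} : Finset (Finset (Fin 5))))
    (fun U _ hU => by
      rw [if_neg]
      intro h
      rcases force U h with rfl | rfl
      · exact hU (Finset.mem_insert_self _ _)
      · exact hU (by simp))]
  rw [Finset.sum_pair hne]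
  rw [if_congr hiffc rfl rfl, if_congr hiffd rfl rfl]
  unfold Phi
  by_cases hBsAR1 : Bs G e₁ e₂ r a b S ∧ AR G e₁ e₂ r a b S c c <;>
    by_cases hBsAR2 : Bs G e₁ e₂ r a b S ∧ AR G e₁ e₂ r a b S d d <;>
    simp [hBsAR1, hBsAR2, hprodc, hprodd] <;> ring

end Claim2

section Claim1

open Classical Relation Finset Sum
set_option linter.unusedSectionVars false
set_option linter.unreachableTactic false
set_option linter.unusedTactic false
set_option linter.unnecessarySeqFocus false
set_option maxHeartbeats 2000000

variable {V E : Type} [Fintype V] [Fintype E] [DecidableEq V] [DecidableEq E]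
variable (G : Multidigraph V E) (w : E → ℤ) (e₁ e₂ : E) (r a b c d : V) (i j : ℤ)

theorem claim1 (hab : a ≠ b) :
    treeCount (Gamma1 G e₁ e₂ a b c d i j) (weight1 w e₁ e₂ i j) (Sum.inl r)
      = ∑ S : Finset {e : E // e ≠ e₁ ∧ e ≠ e₂},
          (i * j * Phi G w e₁ e₂ r a b i j S d c
            + j * (j - i) * Phi G w e₁ e₂ r a b i j S d d) := by
  unfold treeCount
  rw [sum_finset_disjSum]
  refine Finset.sum_congr rfl fun S _ => ?_
  set WW : Finset (Fin 4 ⊕ {u : Unit // i ≠ j}) :=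
    (if alA G e₁ e₂ r a S then ({Sum.inl 1} : Finset (Fin 4 ⊕ {u : Unit // i ≠ j})) else ∅)
      ∪ (if alB G e₁ e₂ r b S then ({Sum.inl 3} : Finset (Fin 4 ⊕ {u : Unit // i ≠ j})) else ∅) with hWW
  set UI : Finset (Fin 4 ⊕ {u : Unit // i ≠ j}) := insert (Sum.inl 0) (insert (Sum.inl 2) WW) with hUI
  have hWmem : ∀ k : Fin 4 ⊕ {u : Unit // i ≠ j}, k ∈ WW ↔
      ((alA G e₁ e₂ r a S ∧ k = Sum.inl 1) ∨ (alB G e₁ e₂ r b S ∧ k = Sum.inl 3)) := by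
    intro k
    by_cases h : alA G e₁ e₂ r a S <;> by_cases h' : alB G e₁ e₂ r b S <;>
      simp [hWW, h, h']
  have hk4 : ∀ k : Fin 4, k = 0 ∨ k = 1 ∨ k = 2 ∨ k = 3 := by decide
  -- targets and sources of new edges
  have t0 : (Gamma1 G e₁ e₂ a b c d i j).tgt (Sum.inr (Sum.inl 0)) = Sum.inr 1 := rfl
  have t1 : (Gamma1 G e₁ e₂ a b c d i j).tgt (Sum.inr (Sum.inl 1)) = Sum.inl a := rfl
  have t2 : (Gamma1 G e₁ e₂ a b c d i j).tgt (Sum.inr (Sum.inl 2)) = Sum.inr 0 := rfl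
  have t3 : (Gamma1 G e₁ e₂ a b c d i j).tgt (Sum.inr (Sum.inl 3)) = Sum.inl b := rfl
  have ts : ∀ u : {u : Unit // i ≠ j},
      (Gamma1 G e₁ e₂ a b c d i j).tgt (Sum.inr (Sum.inr u)) = Sum.inr 1 := fun _ => rfl
  have s0 : (Gamma1 G e₁ e₂ a b c d i j).src (Sum.inr (Sum.inl 0)) = Sum.inl c := rfl
  have s1 : (Gamma1 G e₁ e₂ a b c d i j).src (Sum.inr (Sum.inl 1)) = Sum.inr 1 := rfl
  have s2 : (Gamma1 G e₁ e₂ a b c d i j).src (Sum.inr (Sum.inl 2)) = Sum.inl d := rfl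
  have s3 : (Gamma1 G e₁ e₂ a b c d i j).src (Sum.inr (Sum.inl 3)) = Sum.inr 0 := rfl
  have ss : ∀ u : {u : Unit // i ≠ j},
      (Gamma1 G e₁ e₂ a b c d i j).src (Sum.inr (Sum.inr u)) = Sum.inr 0 := fun _ => rfl
  -- sub-edge counting
  set ssum : Finset (Fin 4 ⊕ {u : Unit // i ≠ j}) → ℕ := fun U =>
    ∑ u : {u : Unit // i ≠ j}, if Sum.inr u ∈ U then 1 else 0 with hssum
  have ssum_ex : ∀ U : Finset (Fin 4 ⊕ {u : Unit // i ≠ j}), ssum U = 1 →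
      ∃ u : {u : Unit // i ≠ j}, (Sum.inr u : Fin 4 ⊕ {u : Unit // i ≠ j}) ∈ U := by
    intro U hU
    by_contra hn
    push_neg at hn
    rw [hssum] at hU
    simp only at hU
    rw [Finset.sum_eq_zero (fun u _ => by rw [if_neg (hn u)])] at hU
    omega
  have ssum_le : ∀ U : Finset (Fin 4 ⊕ {u : Unit // i ≠ j}), ∀ u : {u : Unit // i ≠ j},
      (Sum.inr u : Fin 4 ⊕ {u : Unit // i ≠ j}) ∈ U → ssum U = 1 := by
    intro U u hu
    rw [hssum]
    simp only
    rw [Finset.sum_eq_single u (fun u' _ hne => by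
        exact absurd (Subtype.ext (Subsingleton.elim _ _) : u' = u) hne)
      (fun hmem => absurd (Finset.mem_univ u) hmem)]
    rw [if_pos hu]
  -- in-degree bookkeeping
  have hindL : ∀ (U : Finset (Fin 4 ⊕ {u : Unit // i ≠ j})) (v : V),
      ((S.disjSum U).filter
          (fun e => (Gamma1 G e₁ e₂ a b c d i j).tgt e = Sum.inl v)).card
        = indeg G e₁ e₂ S v + ((if (Sum.inl 1 : Fin 4 ⊕ {u : Unit // i ≠ j}) ∈ U ∧ a = v then 1 else 0)
            + (if (Sum.inl 3 : Fin 4 ⊕ {u : Unit // i ≠ j}) ∈ U ∧ b = v then 1 else 0)) := by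
    intro U v
    rw [filter_disjSum_card]
    have hS : (S.filter
        (fun k => (Gamma1 G e₁ e₂ a b c d i j).tgt (Sum.inl k) = Sum.inl v)).card
        = indeg G e₁ e₂ S v := by
      unfold indeg
      congr 1
      ext e
      simp [Gamma1]
    rw [hS, card_filter_sum_univ, Fintype.sum_sum_type, Fin.sum_univ_four]
    simp only [t0, t1, t2, t3, ts]
    simp [Sum.inl.injEq]
  have hind0 : ∀ U : Finset (Fin 4 ⊕ {u : Unit // i ≠ j}),
      ((S.disjSum U).filter
          (fun e => (Gamma1 G e₁ e₂ a b c d i j).tgt e = Sum.inr 0)).card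
        = (if (Sum.inl 2 : Fin 4 ⊕ {u : Unit // i ≠ j}) ∈ U then 1 else 0) := by
    intro U
    rw [filter_disjSum_card]
    have hS : (S.filter
        (fun k => (Gamma1 G e₁ e₂ a b c d i j).tgt (Sum.inl k) = Sum.inr 0)).card = 0 := by
      simp [Finset.card_eq_zero, Finset.filter_eq_empty_iff, Gamma1]
    rw [hS, card_filter_sum_univ, Fintype.sum_sum_type, Fin.sum_univ_four]
    simp only [t0, t1, t2, t3, ts]
    simp
  have hind1 : ∀ U : Finset (Fin 4 ⊕ {u : Unit // i ≠ j}),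
      ((S.disjSum U).filter
          (fun e => (Gamma1 G e₁ e₂ a b c d i j).tgt e = Sum.inr 1)).card
        = (if (Sum.inl 0 : Fin 4 ⊕ {u : Unit // i ≠ j}) ∈ U then 1 else 0) + ssum U := by
    intro U
    rw [filter_disjSum_card]
    have hS : (S.filter
        (fun k => (Gamma1 G e₁ e₂ a b c d i j).tgt (Sum.inl k) = Sum.inr 1)).card = 0 := by
      simp [Finset.card_eq_zero, Finset.filter_eq_empty_iff, Gamma1]
    rw [hS, card_filter_sum_univ, Fintype.sum_sum_type, Fin.sum_univ_four]
    simp only [t0, t1, t2, t3, ts]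
    rw [hssum]
    simp
  -- forcing the new part
  have force : ∀ U : Finset (Fin 4 ⊕ {u : Unit // i ≠ j}),
      IsOrientedSpanningTree (Gamma1 G e₁ e₂ a b c d i j) (Sum.inl r) (S.disjSum U) →
        U = UI ∨ (∃ h : i ≠ j,
          U = insert (Sum.inr ⟨(), h⟩) (insert (Sum.inl 2) WW)) := by
    rintro U ⟨h1, h0, -⟩
    have H2 : (Sum.inl 2 : Fin 4 ⊕ {u : Unit // i ≠ j}) ∈ U := by
      have := h1 (Sum.inr 0) (by simp)
      rw [hind0 U] at this
      by_cases hm : (Sum.inl 2 : Fin 4 ⊕ {u : Unit // i ≠ j}) ∈ U <;> simp [hm] at this ⊢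
    have H01 : ((Sum.inl 0 : Fin 4 ⊕ {u : Unit // i ≠ j}) ∈ U ∧ ssum U = 0) ∨ ((Sum.inl 0 : Fin 4 ⊕ {u : Unit // i ≠ j}) ∉ U ∧ ssum U = 1) := by
      have := h1 (Sum.inr 1) (by simp)
      rw [hind1 U] at this
      by_cases hm : (Sum.inl 0 : Fin 4 ⊕ {u : Unit // i ≠ j}) ∈ U <;> simp [hm] at this ⊢ <;> omega
    have H3 : ((Sum.inl 1 : Fin 4 ⊕ {u : Unit // i ≠ j}) ∈ U) ↔ alA G e₁ e₂ r a S := by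
      unfold alA
      by_cases har : a = r
      · have := h0
        rw [show (Sum.inl r : V ⊕ Fin 2) = Sum.inl a by rw [har]] at this
        rw [hindL U a] at this
        by_cases hm : (Sum.inl 1 : Fin 4 ⊕ {u : Unit // i ≠ j}) ∈ U <;> simp [hm, har] at this ⊢ <;> omega
      · have := h1 (Sum.inl a) (by simp [har])
        rw [hindL U a] at this
        by_cases hm : (Sum.inl 1 : Fin 4 ⊕ {u : Unit // i ≠ j}) ∈ U <;>
          simp [hm, har, Ne.symm hab] at this ⊢ <;> omega
    have H4 : ((Sum.inl 3 : Fin 4 ⊕ {u : Unit // i ≠ j}) ∈ U) ↔ alB G e₁ e₂ r b S := by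
      unfold alB
      by_cases hbr : b = r
      · have := h0
        rw [show (Sum.inl r : V ⊕ Fin 2) = Sum.inl b by rw [hbr]] at this
        rw [hindL U b] at this
        by_cases hm : (Sum.inl 3 : Fin 4 ⊕ {u : Unit // i ≠ j}) ∈ U <;> simp [hm, hbr] at this ⊢ <;> omega
      · have := h1 (Sum.inl b) (by simp [hbr])
        rw [hindL U b] at this
        by_cases hm : (Sum.inl 3 : Fin 4 ⊕ {u : Unit // i ≠ j}) ∈ U <;>
          simp [hm, hbr, hab] at this ⊢ <;> omega
    rcases H01 with ⟨h0m, hsm⟩ | ⟨h0m, hsm⟩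
    · left
      have hnos : ∀ u : {u : Unit // i ≠ j}, (Sum.inr u : Fin 4 ⊕ {u : Unit // i ≠ j}) ∉ U := by
        intro u hu
        rw [ssum_le U u hu] at hsm
        omega
      ext k
      simp only [hUI, Finset.mem_insert, hWmem]
      rcases k with k4 | u
      · rcases hk4 k4 with rfl | rfl | rfl | rfl <;>
          simp_all [H2, H3, H4, h0m, Sum.inl.injEq]
      · simp [hnos u]
    · right
      obtain ⟨u₀, hu₀⟩ := ssum_ex U hsm
      refine ⟨u₀.2, ?_⟩
      have hu0eq : (⟨(), u₀.2⟩ : {u : Unit // i ≠ j}) = u₀ :=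
        Subtype.ext (Subsingleton.elim _ _)
      rw [hu0eq]
      ext k
      simp only [Finset.mem_insert, hWmem]
      rcases k with k4 | u
      · rcases hk4 k4 with rfl | rfl | rfl | rfl <;>
          simp_all [H2, H3, H4, h0m, Sum.inl.injEq]
      · have hueq : u = u₀ := Subtype.ext (Subsingleton.elim _ _)
        rw [hueq]
        simp [hu₀]
  -- candidate iff
  have candidate : ∀ (U₀ : Finset (Fin 4 ⊕ {u : Unit // i ≠ j})) (z : V),
      ((Sum.inl 2 : Fin 4 ⊕ {u : Unit // i ≠ j}) ∈ U₀) →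
      (((Sum.inl 1 : Fin 4 ⊕ {u : Unit // i ≠ j}) ∈ U₀) ↔ alA G e₁ e₂ r a S) →
      (((Sum.inl 3 : Fin 4 ⊕ {u : Unit // i ≠ j}) ∈ U₀) ↔ alB G e₁ e₂ r b S) →
      ((if (Sum.inl 0 : Fin 4 ⊕ {u : Unit // i ≠ j}) ∈ U₀ then 1 else 0) + ssum U₀ = 1) →
      ((Sum.inl 0 : Fin 4 ⊕ {u : Unit // i ≠ j}) ∈ U₀ → z = c) →
      (∀ u : {u : Unit // i ≠ j}, (Sum.inr u : Fin 4 ⊕ {u : Unit // i ≠ j}) ∈ U₀ → z = d) →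
      (IsOrientedSpanningTree (Gamma1 G e₁ e₂ a b c d i j) (Sum.inl r) (S.disjSum U₀) ↔
        Bs G e₁ e₂ r a b S ∧ AR G e₁ e₂ r a b S d z) := by
    intro U₀ z h2m h1m h3m hv2 h0z hsz
    set π : V ⊕ Fin 2 → V := Sum.elim id ![d, z] with hπ
    have hπ0 : π (Sum.inr 0) = d := rfl
    have hπ1 : π (Sum.inr 1) = z := rfl
    -- the step from v₂ to z, and from v₁ to d
    have st10 : mstep (Gamma1 G e₁ e₂ a b c d i j) (S.disjSum U₀)
        (Sum.inr 0) (Sum.inl d) :=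
      ⟨Sum.inr (Sum.inl 2), by simp [h2m], t2, s2⟩
    have hpath : Relation.ReflTransGen
        (mstep (Gamma1 G e₁ e₂ a b c d i j) (S.disjSum U₀)) (Sum.inr 1) (Sum.inl z) := by
      by_cases h0m : (Sum.inl 0 : Fin 4 ⊕ {u : Unit // i ≠ j}) ∈ U₀
      · rw [h0z h0m] at *
        exact Relation.ReflTransGen.single ⟨Sum.inr (Sum.inl 0), by simp [h0m], t0, s0⟩
      · have hs1 : ssum U₀ = 1 := by
          rw [if_neg h0m] at hv2; omega
        obtain ⟨u₀, hu₀⟩ := ssum_ex U₀ hs1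
        rw [hsz u₀ hu₀] at *
        exact (Relation.ReflTransGen.single
          ⟨Sum.inr (Sum.inr u₀), by simp [hu₀], ts u₀, ss u₀⟩).tail st10
    rw [ist_iff_reach]
    constructor
    · rintro ⟨h1, h0, hre⟩
      have hr0 : indeg G e₁ e₂ S r = 0 := by
        have := h0
        rw [hindL U₀ r] at this
        omega
      constructor
      · refine ⟨?_, hr0, ?_, ?_⟩
        · intro v h1' h2' h3'
          have := h1 (Sum.inl v) (by simp [h1'])
          rw [hindL U₀ v] at this
          simp [Ne.symm h2', Ne.symm h3'] at this
          exact this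
        · by_cases har : a = r
          · rw [har, hr0]; omega
          · have := h1 (Sum.inl a) (by simp [har])
            rw [hindL U₀ a] at this
            by_cases h0m' : (Sum.inl 1 : Fin 4 ⊕ {u : Unit // i ≠ j}) ∈ U₀ ∧ a = a <;>
              by_cases h1m' : (Sum.inl 3 : Fin 4 ⊕ {u : Unit // i ≠ j}) ∈ U₀ ∧ b = a <;>
              simp only [h0m', h1m', if_true, if_false] at this <;> omega
        · by_cases hbr : b = r
          · rw [hbr, hr0]; omega
          · have := h1 (Sum.inl b) (by simp [hbr])
            rw [hindL U₀ b] at this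
            by_cases h0m' : (Sum.inl 1 : Fin 4 ⊕ {u : Unit // i ≠ j}) ∈ U₀ ∧ a = b <;>
              by_cases h1m' : (Sum.inl 3 : Fin 4 ⊕ {u : Unit // i ≠ j}) ∈ U₀ ∧ b = b <;>
              simp only [h0m', h1m', if_true, if_false] at this <;> omega
      · intro v
        have hfwd : ∀ x y, mstep (Gamma1 G e₁ e₂ a b c d i j) (S.disjSum U₀) x y →
            Relation.ReflTransGen (relxy G e₁ e₂ r a b S d z) (π x) (π y) := by
          rintro x y ⟨e, he, hte, hse⟩
          rcases e with e | k
          · have heS : e ∈ S := Finset.inl_mem_disjSum.1 he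
            refine Relation.ReflTransGen.single (Or.inl ⟨e, heS, ?_, ?_⟩)
            · rw [← hte]; rfl
            · rw [← hse]; rfl
          · have hk : k ∈ U₀ := Finset.inr_mem_disjSum.1 he
            rcases k with k4 | u
            · rcases hk4 k4 with rfl | rfl | rfl | rfl
              · rw [← hte, ← hse, t0, s0, hπ1, h0z hk]
                exact Relation.ReflTransGen.refl
              · rw [← hte, ← hse, t1, s1]
                exact Relation.ReflTransGen.single
                  (Or.inr (Or.inr ⟨h1m.1 hk, rfl, rfl⟩))
              · rw [← hte, ← hse, t2, s2]
                exact Relation.ReflTransGen.refl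
              · rw [← hte, ← hse, t3, s3]
                exact Relation.ReflTransGen.single
                  (Or.inr (Or.inl ⟨h3m.1 hk, rfl, rfl⟩))
            · rw [← hte, ← hse, ts u, ss u, hπ1, hπ0, hsz u hk]
        have := Relation.ReflTransGen.lift' π hfwd _ _ (hre (Sum.inl v))
        simpa [hπ, Function.onFun] using this
    · rintro ⟨hBs, hAR⟩
      have hir := hBs.2.1
      refine ⟨?_, ?_, ?_⟩
      · intro x hx
        rcases x with v | k
        · have hvr : v ≠ r := by rintro rfl; exact hx rfl
          rw [hindL U₀ v]
          by_cases hva : v = a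
          · rw [hva] at hvr ⊢
            have hA' : alA G e₁ e₂ r a S ↔ indeg G e₁ e₂ S a = 0 := by
              unfold alA; simp [hvr]
            by_cases hzz : indeg G e₁ e₂ S a = 0
            · rw [if_pos ⟨h1m.2 (hA'.2 hzz), rfl⟩, if_neg (fun h => hab h.2.symm)]
              omega
            · rw [if_neg (fun h => hzz (hA'.1 (h1m.1 h.1))), if_neg (fun h => hab h.2.symm)]
              have := hBs.2.2.1
              omega
          · by_cases hvb : v = b
            · rw [hvb] at hvr ⊢
              have hB' : alB G e₁ e₂ r b S ↔ indeg G e₁ e₂ S b = 0 := by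
                unfold alB; simp [hvr]
              by_cases hzz : indeg G e₁ e₂ S b = 0
              · rw [if_neg (fun h => hab h.2), if_pos ⟨h3m.2 (hB'.2 hzz), rfl⟩]
                omega
              · rw [if_neg (fun h => hab h.2),
                  if_neg (fun h => hzz (hB'.1 (h3m.1 h.1)))]
                have := hBs.2.2.2
                omega
            · rw [if_neg (fun h => hva h.2.symm), if_neg (fun h => hvb h.2.symm)]
              have := hBs.1 v hvr hva hvb
              omega
        · have hk2 : ∀ k : Fin 2, k = 0 ∨ k = 1 := by decide
          rcases hk2 k with rfl | rfl
          · rw [hind0 U₀, if_pos h2m]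
          · rw [hind1 U₀]
            exact hv2
      · rw [hindL U₀ r]
        rw [hir, if_neg (fun h => (h1m.1 h.1).2 h.2), if_neg (fun h => (h3m.1 h.1).2 h.2)]
      · have hVreach : ∀ v : V, Relation.ReflTransGen
            (mstep (Gamma1 G e₁ e₂ a b c d i j) (S.disjSum U₀)) (Sum.inl v) (Sum.inl r) := by
          intro v
          have hbwd : ∀ p q : V, relxy G e₁ e₂ r a b S d z p q →
              Relation.ReflTransGen (mstep (Gamma1 G e₁ e₂ a b c d i j) (S.disjSum U₀))
                (Sum.inl p) (Sum.inl q) := by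
            rintro p q (⟨e, he, h1', h2'⟩ | ⟨hB', hp, hq⟩ | ⟨hA', hp, hq⟩)
            · refine Relation.ReflTransGen.single
                ⟨Sum.inl e, by simp [he], ?_, ?_⟩
              · show Sum.inl (G.tgt e.1) = Sum.inl p; rw [h1']
              · show Sum.inl (G.src e.1) = Sum.inl q; rw [h2']
            · rw [hp, hq]
              -- b → v₁ → d
              have st1 : mstep (Gamma1 G e₁ e₂ a b c d i j) (S.disjSum U₀)
                  (Sum.inl b) (Sum.inr 0) :=
                ⟨Sum.inr (Sum.inl 3), by simp [h3m.2 hB'], t3, s3⟩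
              exact (Relation.ReflTransGen.single st1).tail st10
            · rw [hp, hq]
              -- a → v₂ → ⋯ → z
              have st1 : mstep (Gamma1 G e₁ e₂ a b c d i j) (S.disjSum U₀)
                  (Sum.inl a) (Sum.inr 1) :=
                ⟨Sum.inr (Sum.inl 1), by simp [h1m.2 hA'], t1, s1⟩
              exact (Relation.ReflTransGen.single st1).trans hpath
          exact Relation.ReflTransGen.lift' Sum.inl hbwd _ _ (hAR v)
        intro x
        rcases x with v | k
        · exact hVreach v
        · have hk2 : ∀ k : Fin 2, k = 0 ∨ k = 1 := by decide
          rcases hk2 k with rfl | rfl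
          · exact (Relation.ReflTransGen.single st10).trans (hVreach d)
          · exact hpath.trans (hVreach z)
  -- memberships of UI
  have hI0 : (Sum.inl 0 : Fin 4 ⊕ {u : Unit // i ≠ j}) ∈ UI := by simp [hUI]
  have hI2 : (Sum.inl 2 : Fin 4 ⊕ {u : Unit // i ≠ j}) ∈ UI := by simp [hUI]
  have hI1 : ((Sum.inl 1 : Fin 4 ⊕ {u : Unit // i ≠ j}) ∈ UI) ↔ alA G e₁ e₂ r a S := by
    simp [hUI, hWmem, Sum.inl.injEq]
  have hI3 : ((Sum.inl 3 : Fin 4 ⊕ {u : Unit // i ≠ j}) ∈ UI) ↔ alB G e₁ e₂ r b S := by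
    simp [hUI, hWmem, Sum.inl.injEq]
  have hIs : ∀ u : {u : Unit // i ≠ j}, (Sum.inr u : Fin 4 ⊕ {u : Unit // i ≠ j}) ∉ UI := by
    intro u
    simp [hUI, hWmem]
  have hIssum : ssum UI = 0 := by
    rw [hssum]
    exact Finset.sum_eq_zero (fun u _ => by rw [if_neg (hIs u)])
  have hiffI := candidate UI c hI2 hI1 hI3
    (by rw [if_pos hI0, hIssum]) (fun _ => rfl) (fun u hu => absurd hu (hIs u))
  -- weight values
  have wv0 : weight1 w e₁ e₂ i j (Sum.inr (Sum.inl 0)) = i := rfl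
  have wv1 : weight1 w e₁ e₂ i j (Sum.inr (Sum.inl 1)) = j := rfl
  have wv2 : weight1 w e₁ e₂ i j (Sum.inr (Sum.inl 2)) = j := rfl
  have wv3 : weight1 w e₁ e₂ i j (Sum.inr (Sum.inl 3)) = i := rfl
  have wvs : ∀ u : {u : Unit // i ≠ j},
      weight1 w e₁ e₂ i j (Sum.inr (Sum.inr u)) = j - i := fun _ => rfl
  -- the products
  have hprodI : ∏ e ∈ S.disjSum UI, weight1 w e₁ e₂ i j e
      = Wt w e₁ e₂ S * (i * j
          * ((if alB G e₁ e₂ r b S then i else 1) * (if alA G e₁ e₂ r a S then j else 1))) := by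
    rw [Finset.prod_disjSum]
    unfold Wt
    congr 1
    by_cases hA : alA G e₁ e₂ r a S <;> by_cases hB : alB G e₁ e₂ r b S <;>
      simp [hUI, hWW, hA, hB, wv0, wv1, wv2, wv3, Finset.prod_insert,
        Finset.prod_singleton, Sum.inl.injEq,
        show ({Sum.inl 1} ∪ {Sum.inl 3} : Finset (Fin 4 ⊕ {u : Unit // i ≠ j})) = {Sum.inl 1, Sum.inl 3} by
          ext k; simp [or_comm],
        show ((∅ : Finset (Fin 4 ⊕ {u : Unit // i ≠ j})) ∪ {Sum.inl 3}) = {Sum.inl 3} by simp,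
        show (({Sum.inl 1} : Finset (Fin 4 ⊕ {u : Unit // i ≠ j})) ∪ ∅) = {Sum.inl 1} by simp] <;> ring
  rcases eq_or_ne i j with hij' | hij'
  · -- i = j : only one candidate
    have hforce : ∀ U : Finset (Fin 4 ⊕ {u : Unit // i ≠ j}), U ≠ UI →
        (if IsOrientedSpanningTree (Gamma1 G e₁ e₂ a b c d i j) (Sum.inl r) (S.disjSum U)
          then ∏ e ∈ S.disjSum U, weight1 w e₁ e₂ i j e else 0) = 0 := by
      intro U hne
      rw [if_neg]
      intro h
      rcases force U h with rfl | ⟨h', _⟩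
      · exact hne rfl
      · exact h' hij'
    rw [Finset.sum_eq_single UI (fun U _ hne => hforce U hne)
      (fun h => absurd (Finset.mem_univ _) h)]
    rw [if_congr hiffI rfl rfl]
    unfold Phi
    have hz : j * (j - i) * (if Bs G e₁ e₂ r a b S ∧ AR G e₁ e₂ r a b S d d then
        Wt w e₁ e₂ S * (if alB G e₁ e₂ r b S then i else 1)
          * (if alA G e₁ e₂ r a S then j else 1) else 0) = 0 := by
      rw [hij']; ring
    rw [hz, add_zero]
    by_cases hc : Bs G e₁ e₂ r a b S ∧ AR G e₁ e₂ r a b S d c <;>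
      simp [hc, hprodI] <;> ring
  · -- i ≠ j : two candidates
    set us : {u : Unit // i ≠ j} := ⟨(), hij'⟩ with hus
    set UII : Finset (Fin 4 ⊕ {u : Unit // i ≠ j}) := insert (Sum.inr us) (insert (Sum.inl 2) WW) with hUII
    have hII0 : (Sum.inl 0 : Fin 4 ⊕ {u : Unit // i ≠ j}) ∉ UII := by
      simp [hUII, hWmem, Sum.inl.injEq]
    have hII2 : (Sum.inl 2 : Fin 4 ⊕ {u : Unit // i ≠ j}) ∈ UII := by simp [hUII]
    have hII1 : ((Sum.inl 1 : Fin 4 ⊕ {u : Unit // i ≠ j}) ∈ UII) ↔ alA G e₁ e₂ r a S := by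
      simp [hUII, hWmem, Sum.inl.injEq]
    have hII3 : ((Sum.inl 3 : Fin 4 ⊕ {u : Unit // i ≠ j}) ∈ UII) ↔ alB G e₁ e₂ r b S := by
      simp [hUII, hWmem, Sum.inl.injEq]
    have hIIsm : (Sum.inr us : Fin 4 ⊕ {u : Unit // i ≠ j}) ∈ UII := by simp [hUII]
    have hIIssum : ssum UII = 1 := ssum_le UII us hIIsm
    have hiffII := candidate UII d hII2 hII1 hII3
      (by rw [if_neg hII0, hIIssum]) (fun h => absurd h hII0)
      (fun u _ => rfl)
    have hprodII : ∏ e ∈ S.disjSum UII, weight1 w e₁ e₂ i j e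
        = Wt w e₁ e₂ S * (j * (j - i)
            * ((if alB G e₁ e₂ r b S then i else 1)
              * (if alA G e₁ e₂ r a S then j else 1))) := by
      rw [Finset.prod_disjSum]
      unfold Wt
      congr 1
      by_cases hA : alA G e₁ e₂ r a S <;> by_cases hB : alB G e₁ e₂ r b S <;>
        simp [hUII, hWW, hA, hB, wv0, wv1, wv2, wv3, wvs, Finset.prod_insert,
          Finset.prod_singleton, Sum.inl.injEq,
          show ({Sum.inl 1} ∪ {Sum.inl 3} : Finset (Fin 4 ⊕ {u : Unit // i ≠ j})) = {Sum.inl 1, Sum.inl 3} by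
            ext k; simp [or_comm],
          show ((∅ : Finset (Fin 4 ⊕ {u : Unit // i ≠ j})) ∪ {Sum.inl 3}) = {Sum.inl 3} by simp,
          show (({Sum.inl 1} : Finset (Fin 4 ⊕ {u : Unit // i ≠ j})) ∪ ∅) = {Sum.inl 1} by simp] <;> ring
    have hneUI : UI ≠ UII := by
      intro h
      exact hII0 (h ▸ hI0)
    have hforce2 : ∀ U : Finset (Fin 4 ⊕ {u : Unit // i ≠ j}),
        IsOrientedSpanningTree (Gamma1 G e₁ e₂ a b c d i j) (Sum.inl r) (S.disjSum U) →
          U = UI ∨ U = UII := by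
      intro U h
      rcases force U h with rfl | ⟨h', hU⟩
      · exact Or.inl rfl
      · right
        rw [hU, hUII]
    rw [← Finset.sum_subset (Finset.subset_univ ({UI, UII} : Finset (Finset (Fin 4 ⊕ {u : Unit // i ≠ j}))))
      (fun U _ hU => by
        rw [if_neg]
        intro h
        rcases hforce2 U h with rfl | rfl
        · exact hU (Finset.mem_insert_self _ _)
        · exact hU (by simp))]
    rw [Finset.sum_pair hneUI]
    rw [if_congr hiffI rfl rfl, if_congr hiffII rfl rfl]
    unfold Phi
    by_cases hc1 : Bs G e₁ e₂ r a b S ∧ AR G e₁ e₂ r a b S d c <;>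
      by_cases hc2 : Bs G e₁ e₂ r a b S ∧ AR G e₁ e₂ r a b S d d <;>
      simp [hc1, hc2, hprodI, hprodII] <;> ring

end Claim1

section Assemble

open Classical Relation Finset Sum
set_option linter.unusedSectionVars false
set_option maxHeartbeats 1000000

variable {V E : Type} [Fintype V] [Fintype E] [DecidableEq V] [DecidableEq E]

/-- The relabelling equivalence separating out the two distinguished edges. -/
def phiE (e₁ e₂ : E) (hne : e₁ ≠ e₂) : E ≃ ({e : E // e ≠ e₁ ∧ e ≠ e₂} ⊕ Fin 2) where
  toFun e := if h1 : e = e₁ then Sum.inr 0 else if h2 : e = e₂ then Sum.inr 1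
    else Sum.inl ⟨e, h1, h2⟩
  invFun := Sum.elim (fun e => e.1) ![e₁, e₂]
  left_inv e := by
    dsimp only
    by_cases h1 : e = e₁
    · rw [dif_pos h1, h1]; rfl
    · by_cases h2 : e = e₂
      · rw [dif_neg h1, dif_pos h2, h2]; rfl
      · rw [dif_neg h1, dif_neg h2]; rfl
  right_inv x := by
    rcases x with ⟨e, h1, h2⟩ | k
    · simp [h1, h2]
    · have hk2 : ∀ k : Fin 2, k = 0 ∨ k = 1 := by decide
      rcases hk2 k with rfl | rfl
      · show (if h1 : e₁ = e₁ then Sum.inr 0 else _) = Sum.inr 0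
        rw [dif_pos rfl]
      · show (if h1 : e₂ = e₁ then _ else if h2 : e₂ = e₂ then Sum.inr 1 else _)
          = Sum.inr 1
        rw [dif_neg (Ne.symm hne), dif_pos rfl]

end Assemble


/-- **Skein relation, case `i ≤ j`.** For a finite connected directed multigraph `Γ`
with a positive balanced weight, distinct vertices `a, b, c, d`, and distinguished
edges `e₁ : c → b` of weight `i` and `e₂ : d → a` of weight `j` with `i ≤ j`,
the weighted numbers of oriented spanning trees rooted at any vertex `r` of `Γ`
satisfy `i·j·(i+j)·N(Γ, r) = -(i+j)·N(Γ₁, r) + j·N(Γ₂, r)`. -/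
theorem skein_relation_le {V E : Type} [Fintype V] [Fintype E] [DecidableEq V] [DecidableEq E]
    (G : Multidigraph V E) (w : E → ℤ)
    (hconn : MConnected G) (hbal : IsBalanced G w) (hpos : ∀ e, 0 < w e)
    (i j : ℤ) (hi : 0 < i) (hj : 0 < j) (hij : i ≤ j)
    (a b c d : V)
    (hab : a ≠ b) (hac : a ≠ c) (had : a ≠ d) (hbc : b ≠ c) (hbd : b ≠ d) (hcd : c ≠ d)
    (e₁ e₂ : E) (he : e₁ ≠ e₂)
    (h1s : G.src e₁ = c) (h1t : G.tgt e₁ = b) (h1w : w e₁ = i)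
    (h2s : G.src e₂ = d) (h2t : G.tgt e₂ = a) (h2w : w e₂ = j)
    (r : V) :
    i * j * (i + j) * treeCount G w r
      = -(i + j) * treeCount (Gamma1 G e₁ e₂ a b c d i j) (weight1 w e₁ e₂ i j) (Sum.inl r)
        + j * treeCount (Gamma2 G e₁ e₂ a b c d) (weight2 w e₁ e₂ i j) (Sum.inl r) := by
  classical
  have h0 : treeCount G w r
      = treeCount (G0 G e₁ e₂ a b c d) (Sum.elim (fun e : {e : E // e ≠ e₁ ∧ e ≠ e₂} => w e.1) ![i, j]) r := by
    refine treeCount_reindex G (G0 G e₁ e₂ a b c d) w (Sum.elim (fun e : {e : E // e ≠ e₁ ∧ e ≠ e₂} => w e.1) ![i, j])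
      (phiE e₁ e₂ he) ?_ ?_ ?_ r
    · intro e
      by_cases hh1 : e = e₁
      · show (G0 G e₁ e₂ a b c d).src (if h1 : e = e₁ then Sum.inr 0 else _) = G.src e
        rw [dif_pos hh1, hh1, h1s]; rfl
      · by_cases hh2 : e = e₂
        · show (G0 G e₁ e₂ a b c d).src
            (if h1 : e = e₁ then Sum.inr 0 else if h2 : e = e₂ then Sum.inr 1 else _)
            = G.src e
          rw [dif_neg hh1, dif_pos hh2, hh2, h2s]; rfl
        · show (G0 G e₁ e₂ a b c d).src
            (if h1 : e = e₁ then Sum.inr 0 else if h2 : e = e₂ then Sum.inr 1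
              else Sum.inl ⟨e, h1, h2⟩) = G.src e
          rw [dif_neg hh1, dif_neg hh2]; rfl
    · intro e
      by_cases hh1 : e = e₁
      · show (G0 G e₁ e₂ a b c d).tgt (if h1 : e = e₁ then Sum.inr 0 else _) = G.tgt e
        rw [dif_pos hh1, hh1, h1t]; rfl
      · by_cases hh2 : e = e₂
        · show (G0 G e₁ e₂ a b c d).tgt
            (if h1 : e = e₁ then Sum.inr 0 else if h2 : e = e₂ then Sum.inr 1 else _)
            = G.tgt e
          rw [dif_neg hh1, dif_pos hh2, hh2, h2t]; rfl
        · show (G0 G e₁ e₂ a b c d).tgt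
            (if h1 : e = e₁ then Sum.inr 0 else if h2 : e = e₂ then Sum.inr 1
              else Sum.inl ⟨e, h1, h2⟩) = G.tgt e
          rw [dif_neg hh1, dif_neg hh2]; rfl
    · intro e
      by_cases hh1 : e = e₁
      · show Sum.elim (fun e : {e : E // e ≠ e₁ ∧ e ≠ e₂} => w e.1) ![i, j] (if h1 : e = e₁ then Sum.inr 0 else _) = w e
        rw [dif_pos hh1, hh1, h1w]; rfl
      · by_cases hh2 : e = e₂
        · show Sum.elim (fun e : {e : E // e ≠ e₁ ∧ e ≠ e₂} => w e.1) ![i, j]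
            (if h1 : e = e₁ then Sum.inr 0 else if h2 : e = e₂ then Sum.inr 1 else _) = w e
          rw [dif_neg hh1, dif_pos hh2, hh2, h2w]; rfl
        · show Sum.elim (fun e : {e : E // e ≠ e₁ ∧ e ≠ e₂} => w e.1) ![i, j]
            (if h1 : e = e₁ then Sum.inr 0 else if h2 : e = e₂ then Sum.inr 1
              else Sum.inl ⟨e, h1, h2⟩) = w e
          rw [dif_neg hh1, dif_neg hh2]; rfl
  rw [h0, claim0 G w e₁ e₂ r a b c d i j hab, claim1 G w e₁ e₂ r a b c d i j hab,
    claim2 G w e₁ e₂ r a b c d i j hab]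
  rw [Finset.mul_sum, Finset.mul_sum, Finset.mul_sum, ← Finset.sum_add_distrib]
  refine Finset.sum_congr rfl fun S _ => ?_
  have h3 := claim3 G w e₁ e₂ r a b i j hab c d S
  linear_combination (i * j * (i + j)) * h3
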